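/- arXiv:2510.21186 — 4 statements merged into one kernel-verified Lean document; each statement's English description precedes it below -/
import Mathlib

section
/- Gauss's summation theorem: if Re(γ - α - β) > 0 and γ is not a nonpositive integer, then the hypergeometric series F(α,β;γ;1) = Σ_{m≥0} (α)_m (β)_m / (m! (γ)_m) converges and equals Γ(γ)Γ(γ-α-β)/(Γ(γ-α)Γ(γ-β)). -/
open Finset Filter Complex Topology
set_option maxHeartbeats 1000000

noncomputable def Complex.abs : AbsoluteValue ℂ ℝ :=
  IsAbsoluteValue.toAbsoluteValue (norm : ℂ → ℝ)

lemma Complex.norm_eq_abs (z : ℂ) : ‖z‖ = Complex.abs z := rfl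

lemma Complex.abs_natCast (n : ℕ) : Complex.abs (n : ℂ) = n := Complex.norm_natCast n

lemma Complex.sq_abs (z : ℂ) : Complex.abs z ^ 2 = Complex.normSq z := Complex.sq_norm z

noncomputable def poch (z : ℂ) (m : ℕ) : ℂ := ∏ j ∈ Finset.range m, (z + j)

noncomputable def hterm (α β γ : ℂ) (m : ℕ) : ℂ :=
  poch α m * poch β m / ((m.factorial : ℂ) * poch γ m)




lemma poch_zero (z : ℂ) : poch z 0 = 1 := rfl

lemma poch_succ (z : ℂ) (m : ℕ) : poch z (m + 1) = poch z m * (z + m) :=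
  prod_range_succ _ _

lemma poch_succ' (z : ℂ) (m : ℕ) : poch z (m + 1) = z * poch (z + 1) m := by
  rw [poch, prod_range_succ']
  rw [poch, Nat.cast_zero, add_zero, mul_comm]
  congr 1
  refine Finset.prod_congr rfl fun j _ => ?_
  push_cast; ring

lemma poch_ne_zero {z : ℂ} (hz : ∀ j : ℕ, z + j ≠ 0) (m : ℕ) : poch z m ≠ 0 :=
  Finset.prod_ne_zero_iff.mpr fun j _ => hz j

lemma ne_zero_of_re_pos' {z : ℂ} (hz : 0 < z.re) (j : ℕ) : z + j ≠ 0 := by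
  intro h
  have : (z + j).re = 0 := by rw [h]; simp
  simp only [Complex.add_re, Complex.natCast_re] at this
  have : (0:ℝ) ≤ (j:ℝ) := Nat.cast_nonneg j
  linarith

lemma hterm_zero (α β γ : ℂ) : hterm α β γ 0 = 1 := by
  simp [hterm, poch_zero]

lemma hterm_succ (α β γ : ℂ) (m : ℕ) :
    hterm α β γ (m + 1) =
      hterm α β γ m * ((α + m) * (β + m) / (((m:ℂ) + 1) * (γ + m))) := by
  rw [hterm, hterm, poch_succ, poch_succ, poch_succ, Nat.factorial_succ,
    div_mul_div_comm]
  congr 1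
  · ring
  · push_cast; ring

lemma abs_hterm_succ (α β γ : ℂ) (m : ℕ) :
    Complex.abs (hterm α β γ (m + 1)) =
      Complex.abs (hterm α β γ m) *
        (Complex.abs (α + m) * Complex.abs (β + m) /
          (((m:ℝ) + 1) * Complex.abs (γ + m))) := by
  rw [hterm_succ, map_mul, map_div₀, map_mul, map_mul]
  congr 3
  rw [show ((m:ℂ) + 1) = ((m + 1 : ℕ) : ℂ) by push_cast; ring]
  rw [Complex.abs_natCast]
  push_cast; ring


lemma poly5_eventually_pos (c5 c4 c3 c2 c1 c0 : ℝ) (h : 0 < c5) :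
    ∀ᶠ x : ℝ in atTop, 0 < c5*x^5 + c4*x^4 + c3*x^3 + c2*x^2 + c1*x + c0 := by
  have hx : Tendsto (fun x : ℝ => x⁻¹) atTop (𝓝 0) := tendsto_inv_atTop_zero
  have h1 : Tendsto
      (fun x : ℝ => c5 + (c4*x⁻¹ + c3*x⁻¹^2 + c2*x⁻¹^3 + c1*x⁻¹^4 + c0*x⁻¹^5))
      atTop (𝓝 (c5 + (c4*0 + c3*0^2 + c2*0^3 + c1*0^4 + c0*0^5))) := by
    exact tendsto_const_nhds.add
      ((((hx.const_mul c4).add ((hx.pow 2).const_mul c3)).add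
        ((hx.pow 3).const_mul c2)).add ((hx.pow 4).const_mul c1) |>.add
        ((hx.pow 5).const_mul c0))
  have h2 : (c5 + (c4*0 + c3*0^2 + c2*0^3 + c1*0^4 + c0*0^5)) = c5 := by ring
  rw [h2] at h1
  filter_upwards [h1.eventually (lt_mem_nhds h), eventually_gt_atTop (0:ℝ)]
    with x hfx hx0
  have hx' : x ≠ 0 := ne_of_gt hx0
  have key : c5*x^5 + c4*x^4 + c3*x^3 + c2*x^2 + c1*x + c0 =
      x^5 * (c5 + (c4*x⁻¹ + c3*x⁻¹^2 + c2*x⁻¹^3 + c1*x⁻¹^4 + c0*x⁻¹^5)) := by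
    field_simp
    ring
  rw [key]
  positivity

lemma one_add_inv_rpow_le {x q : ℝ} (hq0 : 0 ≤ q) (hq : q ≤ 6) (hx : 6 ≤ x) :
    (1 + 1/x) ^ q ≤ 1 + q/x + 27/x^2 := by
  have hx0 : (0:ℝ) < x := by linarith
  have h1 : (0:ℝ) < 1 + 1/x := by positivity
  rw [Real.rpow_def_of_pos h1, mul_comm]
  have hlog : Real.log (1 + 1/x) ≤ 1/x := by
    have := Real.log_le_sub_one_of_pos h1
    linarith
  have hlog0 : 0 ≤ Real.log (1 + 1/x) := Real.log_nonneg (by nlinarith [one_div_pos.mpr hx0])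
  have h2 : q * Real.log (1 + 1/x) ≤ q/x := by
    calc q * Real.log (1 + 1/x) ≤ q * (1/x) := by
          exact mul_le_mul_of_nonneg_left hlog hq0
      _ = q/x := by ring
  have hy0 : 0 ≤ q/x := by positivity
  have hy1 : q/x ≤ 1 := by rw [div_le_one hx0]; linarith
  calc Real.exp (q * Real.log (1 + 1/x)) ≤ Real.exp (q/x) := Real.exp_le_exp.mpr h2
    _ ≤ (∑ m ∈ Finset.range 2, (q/x) ^ m / m.factorial) + (q/x)^2 * (2+1) / (2*2) := by
        exact Real.exp_bound' hy0 hy1 (n := 2) (by norm_num)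
    _ = 1 + q/x + (3/4) * (q/x)^2 := by
        simp [Finset.sum_range_succ, Nat.factorial]
        ring
    _ ≤ 1 + q/x + 27/x^2 := by
        have h36 : (3/4) * (q/x)^2 ≤ 27/x^2 := by
          rw [div_pow, show (27:ℝ)/x^2 = (3/4)*(36/x^2) by ring]
          apply mul_le_mul_of_nonneg_left ?_ (by norm_num)
          gcongr
          nlinarith
        linarith [h36]



lemma hterm_bound (α β γ : ℂ) {δ' : ℝ} (h0 : 0 < δ') (h2' : δ' ≤ 2)
    (hδ : δ' < (γ - α - β).re) (hγ : ∀ j : ℕ, γ + (j:ℂ) ≠ 0) :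
    ∃ K : ℝ, 0 < K ∧ ∀ m : ℕ, 1 ≤ m →
      Complex.abs (hterm α β γ m) ≤ K * (m:ℝ) ^ (-(1+δ')) := by
  obtain ⟨a, ha⟩ : ∃ a, a = α.re := ⟨_, rfl⟩
  obtain ⟨b, hb⟩ : ∃ b, b = β.re := ⟨_, rfl⟩
  obtain ⟨g, hg⟩ : ∃ g, g = γ.re := ⟨_, rfl⟩
  obtain ⟨A, hA⟩ : ∃ A, A = α.im^2 := ⟨_, rfl⟩
  obtain ⟨B, hB⟩ : ∃ B, B = β.im^2 := ⟨_, rfl⟩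
  obtain ⟨p, hp⟩ : ∃ p, p = 1 + δ' := ⟨_, rfl⟩
  have hre : (γ - α - β).re = g - a - b := by
    simp [Complex.sub_re, ha, hb, hg]
  have hpab : a + b + p < 1 + g := by rw [hp]; rw [hre] at hδ; linarith
  have hp1 : (1:ℝ) ≤ p := by rw [hp]; linarith
  have hp3 : p ≤ 3 := by rw [hp]; linarith
  have hA0 : 0 ≤ A := by rw [hA]; positivity
  have hB0 : 0 ≤ B := by rw [hB]; positivity
  -- the key eventual inequality
  have key : ∀ᶠ m : ℕ in atTop,
      Complex.abs (hterm α β γ (m+1)) * ((m:ℝ)+1) ^ p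
        ≤ Complex.abs (hterm α β γ m) * (m:ℝ) ^ p := by
    have hc5 : 0 < 2 - 2*p + 2*g - 2*b - 2*a := by linarith
    have hE := poly5_eventually_pos (2 - 2*p + 2*g - 2*b - 2*a)
      (-26 - B - A + 4*g + g^2 - 4*b*p - b^2 - 4*a*p - 4*a*b - a^2)
      (-2*p*B - 2*p*A + 2*g + 2*g^2 - 54*b - 2*b*A - 2*b^2*p - 54*a - 2*a*B
        - 8*a*b*p - 2*a*b^2 - 2*a^2*p - 2*a^2*b)
      (-27*B - 27*A - A*B + g^2 - 4*b*p*A - 27*b^2 - b^2*A - 4*a*p*B - 108*a*b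
        - 4*a*b^2*p - 27*a^2 - a^2*B - 4*a^2*b*p - a^2*b^2)
      (-2*p*A*B - 54*b*A - 2*b^2*p*A - 54*a*B - 54*a*b^2 - 2*a^2*p*B - 54*a^2*b
        - 2*a^2*b^2*p)
      (-27*A*B - 27*b^2*A - 27*a^2*B - 27*a^2*b^2) hc5
    filter_upwards [tendsto_natCast_atTop_atTop.eventually hE,
      eventually_ge_atTop 6] with m hEm hm6
    have hx6 : (6:ℝ) ≤ (m:ℝ) := by exact_mod_cast hm6
    set x : ℝ := (m:ℝ) with hxdef
    have hx0 : (0:ℝ) < x := by linarith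
    have hxne : x ≠ 0 := ne_of_gt hx0
    have hx1 : (0:ℝ) < x + 1 := by linarith
    -- squared abs values
    have hu2 : (Complex.abs (α + (m:ℂ)))^2 = (x + a)^2 + A := by
      rw [Complex.sq_abs, Complex.normSq_apply]
      simp only [Complex.add_re, Complex.add_im, Complex.natCast_re,
        Complex.natCast_im, add_zero]
      rw [ha, hA]; ring
    have hv2 : (Complex.abs (β + (m:ℂ)))^2 = (x + b)^2 + B := by
      rw [Complex.sq_abs, Complex.normSq_apply]
      simp only [Complex.add_re, Complex.add_im, Complex.natCast_re,
        Complex.natCast_im, add_zero]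
      rw [hb, hB]; ring
    have hw2 : (x + g)^2 ≤ (Complex.abs (γ + (m:ℂ)))^2 := by
      rw [Complex.sq_abs, Complex.normSq_apply]
      simp only [Complex.add_re, Complex.add_im, Complex.natCast_re,
        Complex.natCast_im, add_zero]
      rw [hg]; nlinarith [sq_nonneg γ.im]
    have hw0 : 0 < Complex.abs (γ + (m:ℂ)) := AbsoluteValue.pos _ (hγ m)
    have h3 : (1 + 1/x) ^ (2*p) ≤ 1 + 2*p/x + 27/x^2 := by
      have := one_add_inv_rpow_le (q := 2*p) (by linarith) (by linarith) hx6
      convert this using 2 <;> ring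
    -- the core squared inequality
    have core : ((Complex.abs (α + (m:ℂ)))^2 * (Complex.abs (β + (m:ℂ)))^2)
        * (1 + 1/x) ^ (2*p) ≤ (x+1)^2 * (Complex.abs (γ + (m:ℂ)))^2 := by
      have hE' : ((x+a)^2+A)*((x+b)^2+B)*(x^2+2*p*x+27) ≤ (x+1)^2*(x+g)^2*x^2 := by
        have hid : (2 - 2*p + 2*g - 2*b - 2*a)*x^5
            + (-26 - B - A + 4*g + g^2 - 4*b*p - b^2 - 4*a*p - 4*a*b - a^2)*x^4
            + (-2*p*B - 2*p*A + 2*g + 2*g^2 - 54*b - 2*b*A - 2*b^2*p - 54*a - 2*a*B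
              - 8*a*b*p - 2*a*b^2 - 2*a^2*p - 2*a^2*b)*x^3
            + (-27*B - 27*A - A*B + g^2 - 4*b*p*A - 27*b^2 - b^2*A - 4*a*p*B - 108*a*b
              - 4*a*b^2*p - 27*a^2 - a^2*B - 4*a^2*b*p - a^2*b^2)*x^2
            + (-2*p*A*B - 54*b*A - 2*b^2*p*A - 54*a*B - 54*a*b^2 - 2*a^2*p*B - 54*a^2*b
              - 2*a^2*b^2*p)*x
            + (-27*A*B - 27*b^2*A - 27*a^2*B - 27*a^2*b^2)
            = (x+1)^2*(x+g)^2*x^2 - ((x+a)^2+A)*((x+b)^2+B)*(x^2+2*p*x+27) := by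
          ring
        rw [hid] at hEm
        exact le_of_lt (sub_pos.mp hEm)
      calc ((Complex.abs (α + (m:ℂ)))^2 * (Complex.abs (β + (m:ℂ)))^2) * (1 + 1/x) ^ (2*p)
          = (((x+a)^2+A)*((x+b)^2+B)) * (1 + 1/x) ^ (2*p) := by rw [hu2, hv2]
        _ ≤ (((x+a)^2+A)*((x+b)^2+B)) * (1 + 2*p/x + 27/x^2) := by
            apply mul_le_mul_of_nonneg_left h3
            have h1 : 0 ≤ (x+a)^2+A := by positivity
            have h2 : 0 ≤ (x+b)^2+B := by positivity
            positivity
        _ = (((x+a)^2+A)*((x+b)^2+B)*(x^2+2*p*x+27))/x^2 := by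
            field_simp
        _ ≤ ((x+1)^2*(x+g)^2*x^2)/x^2 := by
            apply div_le_div_of_nonneg_right hE' (by positivity) |>.trans_eq rfl
        _ = (x+1)^2*(x+g)^2 := by field_simp
        _ ≤ (x+1)^2 * (Complex.abs (γ + (m:ℂ)))^2 := by
            apply mul_le_mul_of_nonneg_left hw2 (by positivity)
    -- deduce unsquared inequality
    rw [abs_hterm_succ]
    have habs0 : 0 ≤ Complex.abs (hterm α β γ m) := AbsoluteValue.nonneg _ _
    have hQ : Complex.abs (α + (m:ℂ)) * Complex.abs (β + (m:ℂ)) /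
        ((x + 1) * Complex.abs (γ + (m:ℂ))) * (x+1) ^ p ≤ x ^ p := by
      rw [div_mul_eq_mul_div, div_le_iff₀ (by positivity)]
      -- L ≤ R via L² ≤ R²
      have hsq : ∀ y : ℝ, 0 ≤ y → (y^p)^2 = y^(2*p) := by
        intro y hy
        rw [← Real.rpow_natCast (y^p) 2, ← Real.rpow_mul hy]
        norm_num [mul_comm]
      have hxp1 : x + 1 = x * (1 + 1/x) := by field_simp
      have hL2 : (Complex.abs (α + (m:ℂ)) * Complex.abs (β + (m:ℂ)) * (x+1)^p)^2
          ≤ (x ^ p * ((x + 1) * Complex.abs (γ + (m:ℂ))))^2 := by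
        have e1 : (Complex.abs (α + (m:ℂ)) * Complex.abs (β + (m:ℂ)) * (x+1)^p)^2
            = ((Complex.abs (α + (m:ℂ)))^2 * (Complex.abs (β + (m:ℂ)))^2)
              * ((x+1)^p)^2 := by ring
        have e2 : (x ^ p * ((x + 1) * Complex.abs (γ + (m:ℂ))))^2
            = (x^p)^2 * ((x+1)^2 * (Complex.abs (γ + (m:ℂ)))^2) := by ring
        rw [e1, e2, hsq _ (by linarith), hsq _ (by linarith)]
        have e3 : (x+1)^(2*p) = x^(2*p) * (1+1/x)^(2*p) := by
          rw [hxp1, Real.mul_rpow (le_of_lt hx0) (by positivity)]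
        rw [e3]
        calc ((Complex.abs (α + (m:ℂ)))^2 * (Complex.abs (β + (m:ℂ)))^2)
              * (x^(2*p) * (1+1/x)^(2*p))
            = x^(2*p) * (((Complex.abs (α + (m:ℂ)))^2 * (Complex.abs (β + (m:ℂ)))^2)
              * (1+1/x)^(2*p)) := by ring
          _ ≤ x^(2*p) * ((x+1)^2 * (Complex.abs (γ + (m:ℂ)))^2) := by
              apply mul_le_mul_of_nonneg_left core
              positivity
          _ = x^(2*p) * ((x+1)^2 * (Complex.abs (γ + (m:ℂ)))^2) := rfl
      have hL0 : 0 ≤ Complex.abs (α + (m:ℂ)) * Complex.abs (β + (m:ℂ)) * (x+1)^p := by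
        positivity
      have hR0 : 0 ≤ x ^ p * ((x + 1) * Complex.abs (γ + (m:ℂ))) := by positivity
      exact le_of_pow_le_pow_left₀ two_ne_zero hR0 hL2
    calc Complex.abs (hterm α β γ m) *
          (Complex.abs (α + (m:ℂ)) * Complex.abs (β + (m:ℂ)) /
            ((x + 1) * Complex.abs (γ + (m:ℂ)))) * (x+1) ^ p
        = Complex.abs (hterm α β γ m) *
          (Complex.abs (α + (m:ℂ)) * Complex.abs (β + (m:ℂ)) /
            ((x + 1) * Complex.abs (γ + (m:ℂ))) * (x+1) ^ p) := by ring
      _ ≤ Complex.abs (hterm α β γ m) * x ^ p :=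
          mul_le_mul_of_nonneg_left hQ habs0
  -- extract monotonicity and bound
  obtain ⟨m₀, hm₀⟩ := eventually_atTop.mp key
  set M := max m₀ 1 with hM
  have hmono : ∀ m, M ≤ m →
      Complex.abs (hterm α β γ m) * (m:ℝ)^p ≤
        Complex.abs (hterm α β γ M) * (M:ℝ)^p := by
    intro m hm
    induction m, hm using Nat.le_induction with
    | base => exact le_refl _
    | succ m hm ih =>
      refine le_trans ?_ ih
      have h := hm₀ m (le_trans (le_max_left _ _) hm)
      calc Complex.abs (hterm α β γ (m+1)) * ((m+1:ℕ):ℝ)^p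
          = Complex.abs (hterm α β γ (m+1)) * ((m:ℝ)+1)^p := by push_cast; ring_nf
        _ ≤ Complex.abs (hterm α β γ m) * (m:ℝ)^p := h
  set K := (∑ i ∈ Finset.range (M+1), Complex.abs (hterm α β γ i) * (i:ℝ)^p) + 1 with hK
  have hsum0 : ∀ i ∈ Finset.range (M+1), 0 ≤ Complex.abs (hterm α β γ i) * (i:ℝ)^p := by
    intro i _
    have : (0:ℝ) ≤ (i:ℝ) := Nat.cast_nonneg i
    positivity
  have hKpos : 0 < K := by
    have := Finset.sum_nonneg hsum0
    rw [hK]; linarith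
  refine ⟨K, hKpos, fun m hm1 => ?_⟩
  have hmpos : (0:ℝ) < (m:ℝ) := by exact_mod_cast Nat.lt_of_lt_of_le Nat.zero_lt_one hm1
  have hum : Complex.abs (hterm α β γ m) * (m:ℝ)^p ≤ K := by
    rcases le_or_gt m M with h | h
    · have := Finset.single_le_sum (f := fun i : ℕ => Complex.abs (hterm α β γ i) * (i:ℝ)^p)
        hsum0 (Finset.mem_range.mpr (show m < M + 1 by omega))
      rw [hK]; linarith
    · have h1 := hmono m h.le
      have h2 := Finset.single_le_sum (f := fun i : ℕ => Complex.abs (hterm α β γ i) * (i:ℝ)^p)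
        hsum0 (Finset.mem_range.mpr (show M < M + 1 by omega))
      rw [hK]; linarith
  rw [hp] at hum
  rw [Real.rpow_neg (le_of_lt hmpos), ← div_eq_mul_inv, le_div_iff₀ (Real.rpow_pos_of_pos hmpos _)]
  linarith



lemma shift_ne (γ : ℂ) (hγ : ∀ j : ℕ, γ + (j:ℂ) ≠ 0) :
    ∀ j : ℕ, (γ + 1) + (j:ℂ) ≠ 0 := by
  intro j
  have h := hγ (j+1)
  push_cast at h
  intro hc; apply h; linear_combination hc

lemma shift_re (α β γ : ℂ) : ((γ + 1) - α - β).re = (γ - α - β).re + 1 := by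
  simp [Complex.sub_re, Complex.add_re]
  ring

lemma hterm_summable (α β γ : ℂ) (h1 : 0 < (γ - α - β).re)
    (hγ : ∀ j : ℕ, γ + (j:ℂ) ≠ 0) : Summable (hterm α β γ) := by
  set δ := (γ - α - β).re with hδdef
  have hminpos : 0 < min δ 2 := lt_min h1 (by norm_num)
  have h0 : 0 < min δ 2 / 2 := by linarith
  have hle : min δ 2 / 2 ≤ 2 := by
    have := min_le_right δ 2; linarith
  have hlt : min δ 2 / 2 < δ := by
    have := min_le_left δ 2; linarith
  obtain ⟨K, hK0, hKb⟩ := hterm_bound α β γ h0 hle hlt hγ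
  rw [← summable_nat_add_iff 1]
  apply Summable.of_norm_bounded (g := fun m : ℕ => K * ((m+1:ℕ):ℝ) ^ (-(1 + min δ 2 / 2)))
  · have hs : Summable (fun m : ℕ => (m:ℝ) ^ (-(1 + min δ 2 / 2))) :=
      Real.summable_nat_rpow.mpr (by linarith)
    exact (summable_nat_add_iff 1).mpr (hs.mul_left K)
  · intro m
    rw [Complex.norm_eq_abs]
    exact hKb (m+1) (by omega)

lemma hterm_shift (α β γ : ℂ) (hγ : ∀ j : ℕ, γ + (j:ℂ) ≠ 0) (m : ℕ) :
    γ * hterm α β γ m = (γ + m) * hterm α β (γ+1) m := by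
  have hpγ := poch_ne_zero hγ m
  have hpγ1 := poch_ne_zero (shift_ne γ hγ) m
  have hfac : ((m.factorial : ℂ)) ≠ 0 := Nat.cast_ne_zero.mpr (Nat.factorial_ne_zero m)
  have key : poch γ m * (γ + m) = γ * poch (γ+1) m := by
    rw [← poch_succ, poch_succ']
  rw [hterm, hterm, mul_div_assoc', mul_div_assoc',
    div_eq_div_iff (mul_ne_zero hfac hpγ) (mul_ne_zero hfac hpγ1)]
  linear_combination (-(poch α m * poch β m * (m.factorial:ℂ))) * key

lemma telescope_hasSum (α β γ : ℂ) (h1 : 0 < (γ - α - β).re)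
    (hγ : ∀ j : ℕ, γ + (j:ℂ) ≠ 0) :
    HasSum (fun m : ℕ => ((m:ℂ) * (γ - α - β) - α*β) * hterm α β (γ+1) m) 0 := by
  set δ := (γ - α - β).re with hδdef
  have hminpos : 0 < min δ 2 := lt_min h1 (by norm_num)
  have hmin2 : min δ 2 ≤ 2 := min_le_right δ 2
  have hminδ : min δ 2 ≤ δ := min_le_left δ 2
  set ε := min δ 2 / 2 with hεdef
  have hδ'' : (0:ℝ) < 1 + ε := by positivity
  have hre1 : ((γ+1) - α - β).re = δ + 1 := by rw [shift_re]
  obtain ⟨K, hK0, hKb⟩ := hterm_bound α β (γ+1) (δ' := 1 + ε)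
    (by positivity) (by rw [hεdef]; linarith) (by rw [hre1, hεdef]; linarith)
    (shift_ne γ hγ)
  set B := hterm α β (γ+1) with hBdef
  set c : ℕ → ℂ := fun m => (m:ℂ) * (γ + m) * B m with hcdef
  -- step identity
  have hstep : ∀ m : ℕ, ((m:ℂ) * (γ - α - β) - α*β) * B m = c m - c (m+1) := by
    intro m
    have hm1 : ((m:ℂ) + 1) ≠ 0 := by
      have : (((m+1:ℕ)):ℂ) ≠ 0 := Nat.cast_ne_zero.mpr (by omega)
      push_cast at this; exact this
    have hγ1m := shift_ne γ hγ m
    have hBsucc : ((m:ℂ)+1) * ((γ+1) + m) * B (m+1) = (α+m)*(β+m) * B m := by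
      rw [hBdef, hterm_succ]
      field_simp
    have hc1 : c (m+1) = ((m:ℂ)+1) * (γ + m + 1) * B (m+1) := by
      rw [hcdef]; push_cast; ring
    rw [hc1, hcdef]
    linear_combination hBsucc
  -- summability
  have hsummable : Summable (fun m : ℕ => ((m:ℂ) * (γ - α - β) - α*β) * B m) := by
    rw [← summable_nat_add_iff 1]
    set C := Complex.abs (γ - α - β) + Complex.abs (α*β) with hCdef
    have hC0 : 0 ≤ C := by positivity
    apply Summable.of_norm_bounded
      (g := fun m : ℕ => (C * K) * ((m+1:ℕ):ℝ) ^ (-(1 + (1 + ε)) + 1))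
    · have hs : Summable (fun m : ℕ => (m:ℝ) ^ (-(1 + (1 + ε)) + 1)) := by
        apply Real.summable_nat_rpow.mpr
        have hεpos : (0:ℝ) < ε := by positivity
        linarith
      exact (summable_nat_add_iff 1).mpr (hs.mul_left _)
    · intro m
      set n := m + 1 with hndef
      have hn1 : 1 ≤ n := by omega
      have hnR : (1:ℝ) ≤ (n:ℝ) := by exact_mod_cast hn1
      have hnpos : (0:ℝ) < (n:ℝ) := by linarith
      rw [Complex.norm_eq_abs, map_mul]
      have h1' : Complex.abs ((n:ℂ) * (γ - α - β) - α*β) ≤ C * n := by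
        calc Complex.abs ((n:ℂ) * (γ - α - β) - α*β)
            ≤ Complex.abs ((n:ℂ) * (γ - α - β)) + Complex.abs (α*β) :=
              AbsoluteValue.sub_le_add _ _ _
          _ = (n:ℝ) * Complex.abs (γ - α - β) + Complex.abs (α*β) := by
              rw [map_mul, Complex.abs_natCast]
          _ ≤ (n:ℝ) * Complex.abs (γ - α - β) + (n:ℝ) * Complex.abs (α*β) := by
              nlinarith [AbsoluteValue.nonneg Complex.abs (α*β)]
          _ = C * n := by rw [hCdef]; ring
      have h2' : Complex.abs (B n) ≤ K * (n:ℝ) ^ (-(1+(1+ε))) := hKb n hn1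
      calc Complex.abs ((n:ℂ) * (γ - α - β) - α*β) * Complex.abs (B n)
          ≤ (C * (n:ℝ)) * (K * (n:ℝ) ^ (-(1+(1+ε)))) := by
            apply mul_le_mul h1' h2' (AbsoluteValue.nonneg _ _) (by positivity)
        _ = (C * K) * ((n:ℝ) ^ (1:ℝ) * (n:ℝ) ^ (-(1+(1+ε)))) := by
            rw [Real.rpow_one]; ring
        _ = (C * K) * ((n:ℝ)) ^ (-(1 + (1 + ε)) + 1) := by
            rw [← Real.rpow_add hnpos]
            congr 1
            ring
  -- partial sums tend to 0
  rw [hsummable.hasSum_iff_tendsto_nat]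
  have hpartial : ∀ n : ℕ, ∑ i ∈ Finset.range n,
      ((i:ℂ) * (γ - α - β) - α*β) * B i = -(c n) := by
    intro n
    calc ∑ i ∈ Finset.range n, ((i:ℂ) * (γ - α - β) - α*β) * B i
        = ∑ i ∈ Finset.range n, (c i - c (i+1)) :=
          Finset.sum_congr rfl fun i _ => hstep i
      _ = c 0 - c n := Finset.sum_range_sub' c n
      _ = -(c n) := by rw [hcdef]; simp
  have hczero : Tendsto c atTop (𝓝 0) := by
    rw [tendsto_zero_iff_norm_tendsto_zero]
    apply squeeze_zero' (f := fun n => ‖c n‖)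
      (g := fun n => ((1 + Complex.abs γ) * K) * (n:ℝ) ^ (-ε))
    · exact Eventually.of_forall fun n => norm_nonneg _
    · filter_upwards [eventually_ge_atTop 1] with n hn1
      have hnR : (1:ℝ) ≤ (n:ℝ) := by exact_mod_cast hn1
      have hnpos : (0:ℝ) < (n:ℝ) := by linarith
      rw [Complex.norm_eq_abs, hcdef]
      simp only [map_mul, Complex.abs_natCast]
      have h2' : Complex.abs (B n) ≤ K * (n:ℝ) ^ (-(1+(1+ε))) := hKb n hn1
      have h3' : Complex.abs (γ + n) ≤ (1 + Complex.abs γ) * n := by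
        calc Complex.abs (γ + n) ≤ Complex.abs γ + Complex.abs (n:ℂ) :=
              AbsoluteValue.add_le _ _ _
          _ = Complex.abs γ + (n:ℝ) := by rw [Complex.abs_natCast]
          _ ≤ (1 + Complex.abs γ) * n := by
              nlinarith [AbsoluteValue.nonneg Complex.abs γ]
      calc (n:ℝ) * Complex.abs (γ + n) * Complex.abs (B n)
          ≤ (n:ℝ) * ((1 + Complex.abs γ) * n) * (K * (n:ℝ) ^ (-(1+(1+ε)))) := by
            apply mul_le_mul ?_ h2' (AbsoluteValue.nonneg _ _) (by positivity)
            apply mul_le_mul_of_nonneg_left h3' (by positivity)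
        _ = ((1 + Complex.abs γ) * K) * ((n:ℝ)^(2:ℝ) * (n:ℝ) ^ (-(1+(1+ε)))) := by
            rw [show ((n:ℝ)^(2:ℝ)) = (n:ℝ)^(2:ℕ) by
              rw [← Real.rpow_natCast (n:ℝ) 2]; norm_num]
            ring
        _ = ((1 + Complex.abs γ) * K) * (n:ℝ) ^ (-ε) := by
            rw [← Real.rpow_add hnpos]
            congr 2
            ring
    · have hεpos : (0:ℝ) < ε := by positivity
      have := (tendsto_rpow_neg_atTop hεpos).comp tendsto_natCast_atTop_atTop
      have h0 := this.const_mul ((1 + Complex.abs γ) * K)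
      simpa using h0
  have : Tendsto (fun n => -(c n)) atTop (𝓝 0) := by
    simpa using hczero.neg
  exact Tendsto.congr (fun n => (hpartial n).symm) this

lemma contiguous (α β γ : ℂ) (h1 : 0 < (γ - α - β).re)
    (hγ : ∀ j : ℕ, γ + (j:ℂ) ≠ 0) :
    γ * (γ - α - β) * ∑' m, hterm α β γ m
      = (γ - α) * (γ - β) * ∑' m, hterm α β (γ+1) m := by
  have h1' : 0 < ((γ+1) - α - β).re := by rw [shift_re]; linarith
  have hA := (hterm_summable α β γ h1 hγ).hasSum
  have hB := (hterm_summable α β (γ+1) h1' (shift_ne γ hγ)).hasSum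
  have h3 := (hA.mul_left (γ * (γ - α - β))).sub (hB.mul_left ((γ - α) * (γ - β)))
  have h4 : (fun m : ℕ => γ*(γ-α-β) * hterm α β γ m
        - (γ-α)*(γ-β) * hterm α β (γ+1) m)
      = fun m : ℕ => ((m:ℂ)*(γ-α-β) - α*β) * hterm α β (γ+1) m := by
    funext m
    linear_combination (γ - α - β) * hterm_shift α β γ hγ m
  rw [h4] at h3
  have h5 := h3.unique (telescope_hasSum α β γ h1 hγ)
  linear_combination h5



lemma re_add_nat (z : ℂ) (n : ℕ) : (z + (n:ℂ)).re = z.re + n := by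
  simp

lemma ne_of_re_pos {z : ℂ} (h : 0 < z.re) : z ≠ 0 := by
  intro hc; rw [hc] at h; simp at h

lemma iterate_eq (α β γ : ℂ) (h1 : 0 < (γ - α - β).re)
    (hγ : ∀ j : ℕ, γ + (j:ℂ) ≠ 0) (n : ℕ) :
    ∑' m, hterm α β γ m =
      (∏ k ∈ Finset.range n,
        ((γ - α + k) * (γ - β + k) / ((γ + k) * (γ - α - β + k))))
        * ∑' m, hterm α β (γ + n) m := by
  induction n with
  | zero => simp
  | succ n ih =>
    rw [Finset.prod_range_succ, ih]
    have hγn : ∀ j : ℕ, (γ + (n:ℂ)) + (j:ℂ) ≠ 0 := fun j => by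
      have h := hγ (n + j); push_cast at h
      intro hc; apply h; linear_combination hc
    have hren : ((γ + (n:ℂ)) - α - β).re = (γ - α - β).re + n := by
      simp [Complex.sub_re, Complex.add_re]
      ring
    have h1n : 0 < ((γ + (n:ℂ)) - α - β).re := by
      rw [hren]
      have : (0:ℝ) ≤ (n:ℝ) := Nat.cast_nonneg n
      linarith
    have hcont := contiguous α β (γ + (n:ℂ)) h1n hγn
    have hne1 : (γ + (n:ℂ)) ≠ 0 := hγ n
    have hne2 : ((γ + (n:ℂ)) * (γ - α - β + (n:ℂ))) ≠ 0 := by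
      apply mul_ne_zero hne1
      apply ne_of_re_pos
      have : (γ - α - β + (n:ℂ)).re = (γ - α - β).re + n := re_add_nat _ n
      rw [this]
      have : (0:ℝ) ≤ (n:ℝ) := Nat.cast_nonneg n
      linarith
    have hS : ∑' m, hterm α β (γ + (n:ℂ)) m =
        (γ - α + (n:ℂ)) * (γ - β + (n:ℂ)) / ((γ + (n:ℂ)) * (γ - α - β + (n:ℂ)))
          * ∑' m, hterm α β ((γ + (n:ℂ)) + 1) m := by
      rw [div_mul_eq_mul_div, eq_div_iff hne2]
      linear_combination hcont
    rw [hS]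
    rw [show (γ + (n:ℂ)) + 1 = γ + ((n+1:ℕ):ℂ) by push_cast; ring]
    ring

lemma P_tendsto (α β γ : ℂ) (h1 : 0 < (γ - α - β).re)
    (hγ : ∀ j : ℕ, γ + (j:ℂ) ≠ 0) :
    Tendsto (fun n : ℕ => ∏ k ∈ Finset.range n,
        ((γ - α + k) * (γ - β + k) / ((γ + k) * (γ - α - β + k)))) atTop
      (𝓝 (Complex.Gamma γ * Complex.Gamma (γ - α - β) /
        (Complex.Gamma (γ - α) * Complex.Gamma (γ - β)))) := by
  by_cases hzero : (∃ k : ℕ, γ - α + k = 0) ∨ (∃ k : ℕ, γ - β + k = 0)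
  · have hG0 : Complex.Gamma (γ - α) * Complex.Gamma (γ - β) = 0 := by
      rcases hzero with ⟨k, hk⟩ | ⟨k, hk⟩
      · have h : γ - α = -(k:ℂ) := by linear_combination hk
        rw [h, Complex.Gamma_neg_nat_eq_zero, zero_mul]
      · have h : γ - β = -(k:ℂ) := by linear_combination hk
        rw [h, Complex.Gamma_neg_nat_eq_zero, mul_zero]
    rw [hG0, div_zero]
    rcases hzero with ⟨k, hk⟩ | ⟨k, hk⟩
    · apply Tendsto.congr' _ (tendsto_const_nhds : Tendsto (fun _ : ℕ => (0:ℂ)) atTop (𝓝 0))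
      filter_upwards [eventually_gt_atTop k] with n hn
      symm
      apply Finset.prod_eq_zero (Finset.mem_range.mpr hn)
      rw [hk, zero_mul, zero_div]
    · apply Tendsto.congr' _ (tendsto_const_nhds : Tendsto (fun _ : ℕ => (0:ℂ)) atTop (𝓝 0))
      filter_upwards [eventually_gt_atTop k] with n hn
      symm
      apply Finset.prod_eq_zero (Finset.mem_range.mpr hn)
      rw [hk, mul_zero, zero_div]
  · push_neg at hzero
    obtain ⟨hα, hβ⟩ := hzero
    have hΓα : Complex.Gamma (γ - α) ≠ 0 := Complex.Gamma_ne_zero (fun m hc => by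
      apply hα m; rw [hc]; ring)
    have hΓβ : Complex.Gamma (γ - β) ≠ 0 := Complex.Gamma_ne_zero (fun m hc => by
      apply hβ m; rw [hc]; ring)
    have hne : Complex.Gamma (γ - α) * Complex.Gamma (γ - β) ≠ 0 := mul_ne_zero hΓα hΓβ
    have hnum := (Complex.GammaSeq_tendsto_Gamma γ).mul
      (Complex.GammaSeq_tendsto_Gamma (γ - α - β))
    have hden := (Complex.GammaSeq_tendsto_Gamma (γ - α)).mul
      (Complex.GammaSeq_tendsto_Gamma (γ - β))
    have hratio := hnum.div hden hne
    have hevne : ∀ᶠ n : ℕ in atTop,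
        Complex.GammaSeq (γ-α) n * Complex.GammaSeq (γ-β) n ≠ 0 :=
      hden.eventually_ne hne
    rw [← tendsto_add_atTop_iff_nat 1]
    apply Tendsto.congr' _ hratio
    filter_upwards [hevne, eventually_ge_atTop 1] with n hdenne hn1
    -- prove the identity P (n+1) = num / den
    have hn0 : (n:ℂ) ≠ 0 := Nat.cast_ne_zero.mpr (by omega)
    have hfac : ((n.factorial:ℂ)) ≠ 0 := Nat.cast_ne_zero.mpr (Nat.factorial_ne_zero n)
    have hcpow : ∀ s : ℂ, (n:ℂ) ^ s ≠ 0 := fun s => by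
      intro h
      rw [Complex.cpow_eq_zero_iff] at h
      exact hn0 h.1
    have hQγ : (∏ j ∈ Finset.range (n+1), (γ + (j:ℕ))) ≠ 0 :=
      Finset.prod_ne_zero_iff.mpr fun j _ => hγ j
    have hQδ : (∏ j ∈ Finset.range (n+1), ((γ - α - β) + (j:ℕ))) ≠ 0 :=
      Finset.prod_ne_zero_iff.mpr fun j _ => by
        apply ne_of_re_pos
        rw [re_add_nat]
        have : (0:ℝ) ≤ (j:ℝ) := Nat.cast_nonneg j
        linarith
    have hGSα : Complex.GammaSeq (γ-α) n ≠ 0 := left_ne_zero_of_mul hdenne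
    have hGSβ : Complex.GammaSeq (γ-β) n ≠ 0 := right_ne_zero_of_mul hdenne
    have hQγα : (∏ j ∈ Finset.range (n+1), ((γ - α) + (j:ℕ))) ≠ 0 := by
      intro h
      apply hGSα
      simp only [Complex.GammaSeq]
      rw [h, div_zero]
    have hQγβ : (∏ j ∈ Finset.range (n+1), ((γ - β) + (j:ℕ))) ≠ 0 := by
      intro h
      apply hGSβ
      simp only [Complex.GammaSeq]
      rw [h, div_zero]
    have hpow : (n:ℂ)^γ * (n:ℂ)^(γ-α-β) = (n:ℂ)^(γ-α) * (n:ℂ)^(γ-β) := by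
      rw [← Complex.cpow_add _ _ hn0, ← Complex.cpow_add _ _ hn0]
      congr 1
      ring
    simp only [Complex.GammaSeq]
    rw [Finset.prod_div_distrib, Finset.prod_mul_distrib, Finset.prod_mul_distrib]
    simp only [Pi.div_apply]
    have hc1 := hcpow γ
    have hc2 := hcpow (γ - α - β)
    have hc3 := hcpow (γ - α)
    have hc4 := hcpow (γ - β)
    field_simp
    linear_combination hpow

lemma tendsto_one (α β γ : ℂ) (h1 : 0 < (γ - α - β).re)
    (hγ : ∀ j : ℕ, γ + (j:ℂ) ≠ 0) :
    Tendsto (fun n : ℕ => ∑' m, hterm α β (γ + (n:ℂ)) m) atTop (𝓝 1) := by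
  have hbound : Summable (fun m => ‖hterm α β γ m‖) := by
    rw [summable_norm_iff]
    exact hterm_summable α β γ h1 hγ
  have habs_le : ∀ (n : ℕ), 2 * Complex.abs γ ≤ (n:ℝ) → ∀ m : ℕ,
      ‖hterm α β (γ + (n:ℂ)) m‖ ≤ ‖hterm α β γ m‖ := by
    intro n hn m
    simp only [hterm, Complex.norm_eq_abs, map_div₀, map_mul]
    have hF : (0:ℝ) < Complex.abs ((m.factorial : ℂ)) := by
      simp only [Complex.abs_natCast]
      exact_mod_cast Nat.factorial_pos m
    have hpochle : Complex.abs (poch γ m) ≤ Complex.abs (poch (γ + (n:ℂ)) m) := by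
      simp only [poch, map_prod]
      apply Finset.prod_le_prod (fun j _ => AbsoluteValue.nonneg _ _)
      intro j _
      have hup : Complex.abs (γ + (j:ℂ)) ≤ Complex.abs γ + (j:ℝ) := by
        calc Complex.abs (γ + (j:ℂ)) ≤ Complex.abs γ + Complex.abs ((j:ℕ):ℂ) :=
            AbsoluteValue.add_le _ _ _
          _ = Complex.abs γ + (j:ℝ) := by rw [Complex.abs_natCast]
      have hlow : ((n:ℝ) + (j:ℝ)) - Complex.abs γ ≤ Complex.abs (γ + (n:ℂ) + (j:ℂ)) := by
        have h := AbsoluteValue.add_le Complex.abs (γ + (n:ℂ) + (j:ℂ)) (-γ)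
        have he : Complex.abs ((n:ℂ) + (j:ℂ)) = (n:ℝ) + (j:ℝ) := by
          rw [show ((n:ℂ) + (j:ℂ)) = (((n + j:ℕ)):ℂ) by push_cast; ring,
            Complex.abs_natCast]
          push_cast; ring
        rw [show γ + (n:ℂ) + (j:ℂ) + -γ = (n:ℂ) + (j:ℂ) by ring, he] at h
        simp only [map_neg_eq_map] at h
        linarith
      calc Complex.abs (γ + (j:ℂ)) ≤ Complex.abs γ + (j:ℝ) := hup
        _ ≤ ((n:ℝ) + (j:ℝ)) - Complex.abs γ := by linarith
        _ ≤ Complex.abs (γ + (n:ℂ) + (j:ℂ)) := hlow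
    apply div_le_div_of_nonneg_left
      (mul_nonneg (AbsoluteValue.nonneg _ _) (AbsoluteValue.nonneg _ _))
      (mul_pos hF (AbsoluteValue.pos _ (poch_ne_zero hγ m)))
    exact mul_le_mul_of_nonneg_left hpochle (le_of_lt hF)
  have key := tendsto_tsum_of_dominated_convergence
    (𝓕 := (atTop : Filter ℕ))
    (f := fun (n : ℕ) (m : ℕ) => hterm α β (γ + (n:ℂ)) m)
    (g := fun m : ℕ => if m = 0 then (1:ℂ) else 0)
    (bound := fun m => ‖hterm α β γ m‖) hbound ?_ ?_
  · have : (∑' m : ℕ, if m = 0 then (1:ℂ) else 0) = 1 := tsum_ite_eq 0 1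
    rw [this] at key
    exact key
  · -- pointwise convergence
    intro m
    match m with
    | 0 =>
      show Tendsto (fun n : ℕ => hterm α β (γ + (n:ℂ)) 0) atTop (𝓝 1)
      exact Tendsto.congr (fun n => (hterm_zero α β (γ + (n:ℂ))).symm) tendsto_const_nhds
    | (k+1) =>
      show Tendsto (fun n : ℕ => hterm α β (γ + (n:ℂ)) (k+1)) atTop (𝓝 0)
      rw [tendsto_zero_iff_norm_tendsto_zero]
      set C := Complex.abs (poch α (k+1)) * Complex.abs (poch β (k+1)) /
        ((k+1).factorial : ℝ) with hCdef
      have hC0 : 0 ≤ C := by positivity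
      apply squeeze_zero' (g := fun n : ℕ => C * ((n:ℝ) - Complex.abs γ)⁻¹)
      · exact Eventually.of_forall fun n => norm_nonneg _
      · filter_upwards [tendsto_natCast_atTop_atTop.eventually_ge_atTop
          (Complex.abs γ + 1)] with n hn
        have hpos : (1:ℝ) ≤ (n:ℝ) - Complex.abs γ := by linarith
        have hpos' : (0:ℝ) < (n:ℝ) - Complex.abs γ := by linarith
        simp only [hterm, Complex.norm_eq_abs, map_div₀, map_mul]
        have hF : (0:ℝ) < Complex.abs ((((k+1).factorial : ℕ)  : ℂ)) := by
          simp only [Complex.abs_natCast]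
          exact_mod_cast Nat.factorial_pos (k+1)
        have hlowprod : (n:ℝ) - Complex.abs γ ≤ Complex.abs (poch (γ + (n:ℂ)) (k+1)) := by
          simp only [poch, map_prod]
          calc (n:ℝ) - Complex.abs γ
              ≤ ((n:ℝ) - Complex.abs γ) ^ (k+1) := le_self_pow₀ hpos (by omega)
            _ = ∏ _j ∈ Finset.range (k+1), ((n:ℝ) - Complex.abs γ) := by
                rw [Finset.prod_const, Finset.card_range]
            _ ≤ ∏ j ∈ Finset.range (k+1), Complex.abs (γ + (n:ℂ) + (j:ℂ)) := by
                apply Finset.prod_le_prod (fun j _ => by linarith)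
                intro j _
                have h := AbsoluteValue.add_le Complex.abs (γ + (n:ℂ) + (j:ℂ)) (-γ)
                have he : Complex.abs ((n:ℂ) + (j:ℂ)) = (n:ℝ) + (j:ℝ) := by
                  rw [show ((n:ℂ) + (j:ℂ)) = (((n + j:ℕ)):ℂ) by push_cast; ring,
                    Complex.abs_natCast]
                  push_cast; ring
                rw [show γ + (n:ℂ) + (j:ℂ) + -γ = (n:ℂ) + (j:ℂ) by ring, he] at h
                simp only [map_neg_eq_map] at h
                have hj : (0:ℝ) ≤ (j:ℝ) := Nat.cast_nonneg j
                linarith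
        calc Complex.abs (poch α (k+1)) * Complex.abs (poch β (k+1)) /
              (Complex.abs ((((k+1).factorial : ℕ)):ℂ) * Complex.abs (poch (γ + (n:ℂ)) (k+1)))
            ≤ Complex.abs (poch α (k+1)) * Complex.abs (poch β (k+1)) /
              (Complex.abs ((((k+1).factorial : ℕ)):ℂ) * ((n:ℝ) - Complex.abs γ)) := by
              apply div_le_div_of_nonneg_left
                (mul_nonneg (AbsoluteValue.nonneg _ _) (AbsoluteValue.nonneg _ _))
                (mul_pos hF hpos')
              exact mul_le_mul_of_nonneg_left hlowprod (le_of_lt hF)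
          _ = C * ((n:ℝ) - Complex.abs γ)⁻¹ := by
              rw [hCdef, Complex.abs_natCast]
              field_simp
      · have htend : Tendsto (fun n : ℕ => (n:ℝ) - Complex.abs γ) atTop atTop := by
          apply tendsto_atTop_add_const_right
          exact tendsto_natCast_atTop_atTop
        have := htend.inv_tendsto_atTop
        have h2 := this.const_mul C
        simpa using h2
  · -- domination
    filter_upwards [tendsto_natCast_atTop_atTop.eventually_ge_atTop
      (2 * Complex.abs γ)] with n hn
    exact habs_le n hn

theorem gauss_summation' (α β γ : ℂ) (h1 : 0 < (γ - α - β).re)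
    (h2 : ∀ m : ℕ, γ ≠ -(m : ℂ)) :
    HasSum (hterm α β γ)
      (Complex.Gamma γ * Complex.Gamma (γ - α - β) /
        (Complex.Gamma (γ - α) * Complex.Gamma (γ - β))) := by
  have hγ : ∀ j : ℕ, γ + (j:ℂ) ≠ 0 := fun j hc => h2 j (by linear_combination hc)
  have hsum := hterm_summable α β γ h1 hγ
  have hconst : Tendsto (fun n : ℕ =>
      (∏ k ∈ Finset.range n,
        ((γ - α + k) * (γ - β + k) / ((γ + k) * (γ - α - β + k))))
        * ∑' m, hterm α β (γ + (n:ℂ)) m) atTop (𝓝 (∑' m, hterm α β γ m)) := by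
    apply Tendsto.congr (fun n => (iterate_eq α β γ h1 hγ n))
    exact tendsto_const_nhds
  have hlim := (P_tendsto α β γ h1 hγ).mul (tendsto_one α β γ h1 hγ)
  have heq := tendsto_nhds_unique hconst hlim
  rw [mul_one] at heq
  rw [← heq]
  exact hsum.hasSum


/-- Gauss's summation theorem: if `Re(γ - α - β) > 0` and `γ` is not a nonpositive
integer, then the hypergeometric series `F(α,β;γ;1) = Σ_m (α)_m (β)_m / (m! (γ)_m)`
converges, with sum `Γ(γ)Γ(γ-α-β)/(Γ(γ-α)Γ(γ-β))`. -/
theorem gauss_summation (α β γ : ℂ) (h1 : 0 < (γ - α - β).re)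
    (h2 : ∀ m : ℕ, γ ≠ -(m : ℂ)) :
    HasSum
      (fun m : ℕ =>
        (∏ j ∈ Finset.range m, (α + j)) * (∏ j ∈ Finset.range m, (β + j)) /
          ((m.factorial : ℂ) * ∏ j ∈ Finset.range m, (γ + j)))
      (Complex.Gamma γ * Complex.Gamma (γ - α - β) /
        (Complex.Gamma (γ - α) * Complex.Gamma (γ - β))) :=
  gauss_summation' α β γ h1 h2
end

section
/- Let X = (x_1,...,x_n) be uniform on the unit sphere of ℂ^n with n ≥ 2, and define the rank-one matrix P = (p_{ij}) by p_{ij} = x_i·conj(x_j)/(1-conj(x_n)) for i,j < n; p_{nj} = -((1-x_n)/(1-conj(x_n)))·conj(x_j) for j < n; p_{in} = -x_i for i < n; p_{nn} = 1-x_n. Let A = (a_{ij}) and B = (b_{ij}) be n×n matrices of nonnegative integers. If there exists k ∈ {1,...,n} such that the k-th column sum of A plus the k-th row sum of B differs from the k-th row sum of A plus the k-th column sum of B, then E[∏_{i,j} p_{ij}^{a_{ij}}·conj(p_{ij})^{b_{ij}}] = 0. -/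
open MeasureTheory Finset

/-- The rank-one matrix `P = I - R`, where `R` is the unique complex reflection
sending `e_n` to `x`, written in coordinates (indices `0,…,n-1`; the "n-th"
coordinate of the paper is the index `n-1` here). -/
noncomputable def pMat (n : ℕ) (x : Fin n → ℂ) : Matrix (Fin n) (Fin n) ℂ :=
  Matrix.of fun i j =>
    let xn : ℂ := x ⟨n - 1, Nat.sub_lt (Nat.zero_lt_of_lt i.isLt) one_pos⟩
    if (i : ℕ) + 1 < n then
      if (j : ℕ) + 1 < n then x i * (starRingEnd ℂ) (x j) / (1 - (starRingEnd ℂ) xn)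
      else - x i
    else
      if (j : ℕ) + 1 < n then
        -((1 - xn) / (1 - (starRingEnd ℂ) xn)) * (starRingEnd ℂ) (x j)
      else 1 - xn

/-- The complex reflection matrix `R = I - P` sending `e_n` to `x`. -/
noncomputable def rMat (n : ℕ) (x : Fin n → ℂ) : Matrix (Fin n) (Fin n) ℂ :=
  1 - pMat n x

/-- Rising factorial `n^{↑m} = n(n+1)⋯(n+m-1)` as a complex number. -/
noncomputable def ascC (n m : ℕ) : ℂ := ∏ j ∈ Finset.range m, ((n : ℂ) + j)

lemma pMat_apply (n : ℕ) (x : Fin n → ℂ) (i j : Fin n) (h : n - 1 < n) :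
    pMat n x i j =
      if (i : ℕ) + 1 < n then
        if (j : ℕ) + 1 < n then
          x i * (starRingEnd ℂ) (x j) / (1 - (starRingEnd ℂ) (x ⟨n - 1, h⟩))
        else - x i
      else
        if (j : ℕ) + 1 < n then
          -((1 - x ⟨n - 1, h⟩) / (1 - (starRingEnd ℂ) (x ⟨n - 1, h⟩))) * (starRingEnd ℂ) (x j)
        else 1 - x ⟨n - 1, h⟩ := rfl

lemma pMat_scale (n : ℕ) (d x : Fin n → ℂ)
    (hde : ∀ h : n - 1 < n, d ⟨n - 1, h⟩ = 1) (i j : Fin n) :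
    pMat n (fun t => d t * x t) i j = d i * (starRingEnd ℂ) (d j) * pMat n x i j := by
  have hlt : n - 1 < n := Nat.sub_lt (Nat.zero_lt_of_lt i.isLt) one_pos
  have hd1 : d ⟨n - 1, hlt⟩ = 1 := hde hlt
  rw [pMat_apply n _ i j hlt, pMat_apply n x i j hlt]
  have hje : ¬ ((j : ℕ) + 1 < n) → j = ⟨n - 1, hlt⟩ := by
    intro hj; ext; have := j.isLt; simp; omega
  have hie : ¬ ((i : ℕ) + 1 < n) → i = ⟨n - 1, hlt⟩ := by
    intro hi; ext; have := i.isLt; simp; omega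
  split_ifs with h1 h2 h3
  · simp only [hd1, one_mul, map_mul]; ring
  · rw [hje h2, hd1]; simp only [hd1, one_mul, map_one, mul_one]; ring
  · rw [hie h1, hd1]; simp only [hd1, one_mul, map_mul, map_one, one_mul]; ring
  · rw [hie h1, hje h3, hd1]; simp

lemma prod_prod_row (n : ℕ) (d : Fin n → ℂ) (C : Matrix (Fin n) (Fin n) ℕ) (j0 : Fin n)
    (hd : ∀ i, i ≠ j0 → d i = 1) :
    ∏ i, ∏ j, d i ^ C i j = d j0 ^ (∑ j, C j0 j) := by
  have h1 : ∀ i, ∏ j, d i ^ C i j = d i ^ (∑ j, C i j) := fun i => by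
    rw [← Finset.prod_pow_eq_pow_sum]
  simp only [h1]
  apply Finset.prod_eq_single
  · intro b _ hb; rw [hd b hb, one_pow]
  · simp

lemma prod_prod_col (n : ℕ) (d : Fin n → ℂ) (C : Matrix (Fin n) (Fin n) ℕ) (j0 : Fin n)
    (hd : ∀ i, i ≠ j0 → d i = 1) :
    ∏ i, ∏ j, d j ^ C i j = d j0 ^ (∑ i, C i j0) := by
  rw [Finset.prod_comm]
  exact prod_prod_row n d C.transpose j0 hd

lemma dsplit (n : ℕ) (f g : Fin n → Fin n → ℂ) :
    (∏ i, ∏ j, f i j * g i j) = (∏ i, ∏ j, f i j) * (∏ i, ∏ j, g i j) := by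
  rw [← Finset.prod_mul_distrib]
  exact Finset.prod_congr rfl fun i _ => Finset.prod_mul_distrib

/-- Vanishing of moments of the rank-one matrix `P`: if for some `k` the `k`-th column sum
of `A` plus the `k`-th row sum of `B` differs from the `k`-th row sum of `A` plus the `k`-th
column sum of `B`, then `E[∏ p_{ij}^{a_{ij}} conj(p_{ij})^{b_{ij}}] = 0`. -/
theorem pMat_moment_vanish (n : ℕ) (hn : 2 ≤ n)
    (μ : Measure (Fin n → ℂ)) (hprob : IsProbabilityMeasure μ)
    (hsupp : ∀ᵐ x ∂μ, ∑ i, ‖x i‖ ^ 2 = 1)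
    (hinv : ∀ U : Matrix.unitaryGroup (Fin n) ℂ,
      MeasurePreserving (fun x : Fin n → ℂ =>
        Matrix.mulVec (U : Matrix (Fin n) (Fin n) ℂ) x) μ μ)
    (A B : Matrix (Fin n) (Fin n) ℕ) (k : Fin n)
    (hk : (∑ i, A i k) + (∑ j, B k j) ≠ (∑ j, A k j) + (∑ i, B i k)) :
    ∫ x, ∏ i, ∏ j,
        (pMat n x i j) ^ (A i j) * ((starRingEnd ℂ) (pMat n x i j)) ^ (B i j) ∂μ = 0 := by
  classical
  have hlt : n - 1 < n := by omega
  set e : Fin n := ⟨n - 1, hlt⟩ with he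
  set m : Fin n → ℤ := fun t =>
    (((∑ j, A t j : ℕ) : ℤ) + ((∑ i, B i t : ℕ) : ℤ)) -
      (((∑ i, A i t : ℕ) : ℤ) + ((∑ j, B t j : ℕ) : ℤ)) with hmdef
  have hmk : m k ≠ 0 := by
    intro h; apply hk; simp only [hmdef] at h; omega
  have hsum : ∑ t, m t = 0 := by
    simp only [hmdef]
    rw [Finset.sum_sub_distrib, Finset.sum_add_distrib, Finset.sum_add_distrib]
    have e1 : ∑ t, ((∑ j, A t j : ℕ) : ℤ) = ∑ t, ((∑ i, A i t : ℕ) : ℤ) := by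
      push_cast; exact Finset.sum_comm
    have e2 : ∑ t, ((∑ i, B i t : ℕ) : ℤ) = ∑ t, ((∑ j, B t j : ℕ) : ℤ) := by
      push_cast; exact Finset.sum_comm
    omega
  obtain ⟨j0, hj0e, hj0⟩ : ∃ j0, j0 ≠ e ∧ m j0 ≠ 0 := by
    by_cases hke : k = e
    · by_contra h
      push_neg at h
      have h0 : ∑ t, m t = m e :=
        Finset.sum_eq_single e (fun b _ hb => h b hb) (by simp)
      rw [hsum] at h0
      exact hmk (by rw [hke, ← h0])
    · exact ⟨k, hke, hmk⟩
  set M : ℤ := m j0 with hMdef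
  set c : ℂ := Complex.exp (Real.pi * Complex.I / M) with hcdef
  have hc0 : c ≠ 0 := Complex.exp_ne_zero _
  have hcM : c ^ M = -1 := by
    rw [hcdef, ← Complex.exp_int_mul,
      mul_div_cancel₀ _ (by exact_mod_cast hj0 : (M : ℂ) ≠ 0), Complex.exp_pi_mul_I]
  have hcc : (starRingEnd ℂ) c = c⁻¹ := by
    rw [hcdef, ← Complex.exp_conj, ← Complex.exp_neg]
    congr 1
    rw [map_div₀, map_mul, Complex.conj_I, Complex.conj_ofReal, map_intCast]
    ring
  set d : Fin n → ℂ := fun t => if t = j0 then c else 1 with hddef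
  have hd1 : ∀ t, t ≠ j0 → d t = 1 := fun t ht => if_neg ht
  have hdj0 : d j0 = c := if_pos rfl
  have hd0 : ∀ t, d t ≠ 0 := by
    intro t; by_cases h : t = j0 <;> simp [hddef, h, hc0]
  have hdc : ∀ t, (starRingEnd ℂ) (d t) = (d t)⁻¹ := by
    intro t; by_cases h : t = j0 <;> simp [hddef, h, hcc]
  have hde : ∀ h : n - 1 < n, d ⟨n - 1, h⟩ = 1 := fun h => hd1 _ (Ne.symm hj0e)
  have hdunit : Matrix.diagonal d ∈ Matrix.unitaryGroup (Fin n) ℂ := by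
    rw [Matrix.mem_unitaryGroup_iff, Matrix.star_eq_conjTranspose,
      Matrix.diagonal_conjTranspose, Matrix.diagonal_mul_diagonal]
    have hds : ∀ t, d t * star (d t) = 1 := by
      intro t
      have : (star (d t) : ℂ) = (d t)⁻¹ := hdc t
      rw [this, mul_inv_cancel₀ (hd0 t)]
    simp only [Pi.star_apply, hds]
    exact Matrix.diagonal_one
  set F : (Fin n → ℂ) → ℂ := fun x => ∏ i, ∏ j,
      (pMat n x i j) ^ (A i j) * ((starRingEnd ℂ) (pMat n x i j)) ^ (B i j) with hFdef
  -- measurability of F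
  have hp : ∀ i j : Fin n, Measurable fun x : Fin n → ℂ => pMat n x i j := by
    intro i j
    simp only [pMat_apply n _ i j hlt]
    split_ifs
    · exact ((measurable_pi_apply i).mul (continuous_star.measurable.comp (measurable_pi_apply j))).div
        (measurable_const.sub (continuous_star.measurable.comp (measurable_pi_apply _)))
    · exact (measurable_pi_apply i).neg
    · exact (((measurable_const.sub (measurable_pi_apply _)).div
        (measurable_const.sub (continuous_star.measurable.comp (measurable_pi_apply _)))).neg).mul
        (continuous_star.measurable.comp (measurable_pi_apply j))
    · exact measurable_const.sub (measurable_pi_apply _)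
  have hFmeas : Measurable F := by
    apply Finset.measurable_prod
    intro i _
    apply Finset.measurable_prod
    intro j _
    exact ((hp i j).pow_const _).mul ((continuous_star.measurable.comp (hp i j)).pow_const _)
  -- the transformation
  set T : (Fin n → ℂ) → (Fin n → ℂ) := fun x => (Matrix.diagonal d).mulVec x with hTdef
  have hT : MeasurePreserving T μ μ := hinv ⟨Matrix.diagonal d, hdunit⟩
  have hTd : ∀ x, T x = fun t => d t * x t := by
    intro x; funext t; exact Matrix.mulVec_diagonal d x t
  set s : ℂ := (c ^ (∑ j, A j0 j) * (c⁻¹) ^ (∑ j, B j0 j)) *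
      ((c⁻¹) ^ (∑ i, A i j0) * c ^ (∑ i, B i j0)) with hsdef
  have hFT : ∀ x, F (T x) = s * F x := by
    intro x
    rw [hTd x]
    simp only [hFdef]
    calc ∏ i, ∏ j, (pMat n (fun t => d t * x t) i j) ^ A i j *
            ((starRingEnd ℂ) (pMat n (fun t => d t * x t) i j)) ^ B i j
        = ∏ i, ∏ j, ((d i ^ A i j * ((starRingEnd ℂ) (d i)) ^ B i j) *
            ((((starRingEnd ℂ) (d j)) ^ A i j * d j ^ B i j) *
              ((pMat n x i j) ^ A i j * ((starRingEnd ℂ) (pMat n x i j)) ^ B i j))) := by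
          refine Finset.prod_congr rfl fun i _ => Finset.prod_congr rfl fun j _ => ?_
          rw [pMat_scale n d x hde i j, map_mul, map_mul, Complex.conj_conj,
            mul_pow, mul_pow, mul_pow, mul_pow]
          ring
      _ = ((∏ i, ∏ j, d i ^ A i j) * (∏ i, ∏ j, ((starRingEnd ℂ) (d i)) ^ B i j)) *
            (((∏ i, ∏ j, ((starRingEnd ℂ) (d j)) ^ A i j) * (∏ i, ∏ j, d j ^ B i j)) *
              F x) := by
          rw [dsplit, dsplit, dsplit, dsplit]
      _ = s * F x := by
          rw [prod_prod_row n d A j0 hd1,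
            prod_prod_row n (fun t => (starRingEnd ℂ) (d t)) B j0
              (fun t ht => by simp [hd1 t ht]),
            prod_prod_col n (fun t => (starRingEnd ℂ) (d t)) A j0
              (fun t ht => by simp [hd1 t ht]),
            prod_prod_col n d B j0 hd1, hdj0, hcc, hsdef]
          ring
  have hsM : s = c ^ M := by
    have hMeq : M = (((∑ j, A j0 j : ℕ) : ℤ) + ((∑ i, B i j0 : ℕ) : ℤ)) -
        (((∑ i, A i j0 : ℕ) : ℤ) + ((∑ j, B j0 j : ℕ) : ℤ)) := by
      rw [hMdef, hmdef]
    rw [hMeq, zpow_sub₀ hc0, zpow_add₀ hc0, zpow_add₀ hc0, zpow_natCast, zpow_natCast,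
      zpow_natCast, zpow_natCast, hsdef]
    rw [inv_pow, inv_pow]
    ring
  have hs : s = -1 := by rw [hsM, hcM]
  -- conclude
  have key : ∫ x, F x ∂μ = ∫ x, F (T x) ∂μ := by
    conv_lhs => rw [← hT.map_eq]
    exact integral_map hT.measurable.aemeasurable hFmeas.aestronglyMeasurable
  have key2 : ∫ x, F x ∂μ = s * ∫ x, F x ∂μ := by
    conv_lhs => rw [key]
    simp only [hFT]
    exact integral_const_mul s _
  rw [hs] at key2
  have : ∫ x, F x ∂μ = 0 := by linear_combination key2 / 2
  exact this
end

section
/- For the complex reflection matrix R = (r_{ij}) built from a uniform vector on the unit sphere of ℂ^n, any 1 ≤ s < n and any positive integer q, E[r_{ss}^q] = (n-1)/(n+q-1); moreover E[r_{nn}^q] = 0. -/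
open MeasureTheory Finset Complex Topology Filter
noncomputable section

namespace RR
variable {n : ℕ}

local notation "conjC" => (starRingEnd ℂ)

def twoMat (s t : Fin n) (a b c d : ℂ) : Matrix (Fin n) (Fin n) ℂ :=
  Matrix.of fun i j =>
    if i = s then (if j = s then a else if j = t then b else 0)
    else if i = t then (if j = s then c else if j = t then d else 0)
    else if i = j then 1 else 0

lemma twoMat_mem (s t : Fin n) (hst : s ≠ t) (a b c d : ℂ)
    (h1 : a * conjC a + b * conjC b = 1) (h2 : c * conjC c + d * conjC d = 1)
    (h3 : a * conjC c + b * conjC d = 0) :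
    twoMat s t a b c d ∈ Matrix.unitaryGroup (Fin n) ℂ := by
  have h3' : c * conjC a + d * conjC b = 0 := by
    have := congrArg conjC h3
    simpa [mul_comm] using this
  have hts := Ne.symm hst
  rw [Matrix.mem_unitaryGroup_iff]
  ext i j
  rw [Matrix.mul_apply]
  have hsum : ∀ f : Fin n → ℂ, (∀ k, k ≠ s → k ≠ t → f k = 0) → ∑ k, f k = f s + f t := by
    intro f hf
    rw [← Finset.sum_pair hst]
    exact (Finset.sum_subset (Finset.subset_univ _) (fun k _ hk => by
      simp only [Finset.mem_insert, Finset.mem_singleton, not_or] at hk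
      exact hf k hk.1 hk.2)).symm
  by_cases his : i = s
  · rw [hsum _ (fun k hks hkt => by simp [twoMat, Matrix.star_apply, his, hks, hkt])]
    by_cases hjs : j = s
    · simp [twoMat, hst, hts, his, hjs, Matrix.star_apply, Matrix.one_apply, h1]
    · by_cases hjt : j = t
      · simp [twoMat, hst, hts, his, hjt, Matrix.star_apply, Matrix.one_apply, h3]
      · simp [twoMat, hst, hts, his, hjs, hjt, Ne.symm hjs, Ne.symm hjt,
          Matrix.star_apply, Matrix.one_apply]
  · by_cases hit : i = t
    · rw [hsum _ (fun k hks hkt => by simp [twoMat, Matrix.star_apply, his, hit, hks, hkt])]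
      by_cases hjs : j = s
      · simp [twoMat, hst, hts, his, hit, hjs, Matrix.star_apply, Matrix.one_apply, h3']
      · by_cases hjt : j = t
        · simp [twoMat, hst, hts, his, hit, hjt, Matrix.star_apply, Matrix.one_apply, h2]
        · simp [twoMat, hst, hts, his, hit, hjs, hjt, Ne.symm hjs, Ne.symm hjt,
            Matrix.star_apply, Matrix.one_apply]
    · rw [Finset.sum_eq_single i (fun k _ hk => by
        simp [twoMat, Matrix.star_apply, his, hit, Ne.symm hk]) (by simp)]
      by_cases hjs : j = s
      · simp [twoMat, his, hit, hjs, Ne.symm his, Ne.symm hit, Matrix.star_apply,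
          Matrix.one_apply, fun h : i = j => his (h.trans hjs)]
      · by_cases hjt : j = t
        · simp [twoMat, his, hit, hjt, Ne.symm his, Ne.symm hit, Matrix.star_apply,
            Matrix.one_apply, fun h : i = j => hit (h.trans hjt)]
        · simp [twoMat, his, hit, hjs, hjt, Ne.symm his, Ne.symm hit, Ne.symm hjs,
            Ne.symm hjt, Matrix.star_apply, Matrix.one_apply, eq_comm]

lemma twoMat_mulVec (s t : Fin n) (hst : s ≠ t) (a b c d : ℂ) (x : Fin n → ℂ) :
    (twoMat s t a b c d).mulVec x
      = fun i => if i = s then a * x s + b * x t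
        else if i = t then c * x s + d * x t else x i := by
  have hts := Ne.symm hst
  funext i
  show ∑ k, twoMat s t a b c d i k * x k = _
  have hsum : ∀ f : Fin n → ℂ, (∀ k, k ≠ s → k ≠ t → f k = 0) → ∑ k, f k = f s + f t := by
    intro f hf
    rw [← Finset.sum_pair hst]
    exact (Finset.sum_subset (Finset.subset_univ _) (fun k _ hk => by
      simp only [Finset.mem_insert, Finset.mem_singleton, not_or] at hk
      exact hf k hk.1 hk.2)).symm
  by_cases his : i = s
  · rw [hsum _ (fun k hks hkt => by simp [twoMat, his, hks, hkt])]
    simp [twoMat, his, hst, hts]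
  · by_cases hit : i = t
    · rw [hsum _ (fun k hks hkt => by simp [twoMat, his, hit, hks, hkt])]
      simp [twoMat, his, hit, hst, hts]
    · rw [Finset.sum_eq_single i (fun k _ hk => by simp [twoMat, his, hit, Ne.symm hk])
        (by simp), if_neg his, if_neg hit]
      simp [twoMat, his, hit]

end RR

namespace RRX
variable {n : ℕ}
local notation "conjC" => (starRingEnd ℂ)

section Meas
variable (μ : Measure (Fin n → ℂ))

/-- invariance of integral under a unitary -/
lemma integral_unitary
    (hinv : ∀ U : Matrix.unitaryGroup (Fin n) ℂ,
      MeasurePreserving (fun x : Fin n → ℂ => Matrix.mulVec (U : Matrix (Fin n) (Fin n) ℂ) x) μ μ)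
    (U : Matrix (Fin n) (Fin n) ℂ) (hU : U ∈ Matrix.unitaryGroup (Fin n) ℂ)
    (g : (Fin n → ℂ) → ℂ) (hg : AEStronglyMeasurable g μ) :
    ∫ x, g (U.mulVec x) ∂μ = ∫ x, g x ∂μ := by
  have h := hinv ⟨U, hU⟩
  rw [← integral_map h.aemeasurable (by rwa [h.map_eq]), h.map_eq]

/-- integral invariance under a phase change of one coordinate -/
lemma integral_phase
    (hinv : ∀ U : Matrix.unitaryGroup (Fin n) ℂ,
      MeasurePreserving (fun x : Fin n → ℂ => Matrix.mulVec (U : Matrix (Fin n) (Fin n) ℂ) x) μ μ)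
    (i t : Fin n) (hit : i ≠ t) (c : ℂ) (hc : ‖c‖ = 1)
    (g : (Fin n → ℂ) → ℂ) (hg : AEStronglyMeasurable g μ) :
    ∫ x, g (fun j => if j = i then c * x j else x j) ∂μ = ∫ x, g x ∂μ := by
  have hcc : c * conjC c = 1 := by
    rw [Complex.mul_conj]
    norm_cast
    rw [Complex.normSq_eq_norm_sq]
    simp only [hc, one_pow]
  have hmem := RR.twoMat_mem i t hit c 0 0 1 (by simpa using hcc) (by simp) (by simp)
  rw [← integral_unitary μ hinv _ hmem g hg]
  congr 1
  funext x
  rw [RR.twoMat_mulVec i t hit]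
  congr 1
  funext j
  by_cases hji : j = i
  · simp [hji]
  · by_cases hjt : j = t <;> simp [hji, hjt, Ne.symm hit]

/-- vanishing of unbalanced phase moments -/
lemma integral_vanish
    (hinv : ∀ U : Matrix.unitaryGroup (Fin n) ℂ,
      MeasurePreserving (fun x : Fin n → ℂ => Matrix.mulVec (U : Matrix (Fin n) (Fin n) ℂ) x) μ μ)
    (i : Fin n) (a b : ℕ) (hab : a ≠ b) (g : (Fin n → ℂ) → ℂ)
    (hg : AEStronglyMeasurable (fun x => g x * (x i) ^ a * (conjC (x i)) ^ b) μ)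
    (t : Fin n) (hit : i ≠ t)
    (hginv : ∀ (c : ℂ), ‖c‖ = 1 → ∀ x, g (fun j => if j = i then c * x j else x j) = g x) :
    ∫ x, g x * (x i) ^ a * (conjC (x i)) ^ b ∂μ = 0 := by
  set d : ℝ := (a : ℝ) - (b : ℝ) with hd
  have hd0 : d ≠ 0 := sub_ne_zero.2 (by exact_mod_cast hab)
  set c : ℂ := Complex.exp ((Real.pi / d : ℝ) * Complex.I) with hcdef
  have hc : ‖c‖ = 1 := Complex.norm_exp_ofReal_mul_I _
  have hconj : conjC c = Complex.exp (-(((Real.pi / d : ℝ)) * Complex.I)) := by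
    rw [hcdef, ← Complex.exp_conj]
    congr 1
    simp [Complex.conj_ofReal]
  have key : c ^ a * (conjC c) ^ b = -1 := by
    rw [hconj, hcdef, ← Complex.exp_nat_mul, ← Complex.exp_nat_mul, ← Complex.exp_add]
    have : (a : ℂ) * ((Real.pi / d : ℝ) * Complex.I) + (b : ℂ) * -((Real.pi / d : ℝ) * Complex.I)
        = (Real.pi : ℂ) * Complex.I := by
      have : ((a : ℂ) - b) * ((Real.pi / d : ℝ) * Complex.I) = (Real.pi : ℂ) * Complex.I := by
        push_cast [hd]
        have hdc : ((a : ℂ) - b) ≠ 0 := by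
          intro h
          apply hd0
          have := congrArg Complex.re h
          push_cast at this
          simpa [hd] using this
        field_simp
      linear_combination this
    rw [this, Complex.exp_pi_mul_I]
  have step : ∫ x, g x * (x i) ^ a * (conjC (x i)) ^ b ∂μ
      = -∫ x, g x * (x i) ^ a * (conjC (x i)) ^ b ∂μ := by
    conv_lhs => rw [← integral_phase μ hinv i t hit c hc _ hg]
    have : ∀ x : Fin n → ℂ,
        g (fun j => if j = i then c * x j else x j) * ((fun j => if j = i then c * x j else x j) i) ^ a
          * (conjC ((fun j => if j = i then c * x j else x j) i)) ^ b
        = -(g x * (x i) ^ a * (conjC (x i)) ^ b) := by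
      intro x
      rw [hginv c hc x]
      simp only [if_true, eq_self_iff_true]
      rw [map_mul, mul_pow, mul_pow]
      have : g x * (c ^ a * (x i) ^ a) * ((conjC c) ^ b * (conjC (x i)) ^ b)
          = (c ^ a * (conjC c) ^ b) * (g x * (x i) ^ a * (conjC (x i)) ^ b) := by ring
      rw [this, key]
      ring
    rw [integral_congr_ae (Filter.Eventually.of_forall this), integral_neg]
  have h2 : (2:ℂ) * ∫ x, g x * (x i) ^ a * (conjC (x i)) ^ b ∂μ = 0 := by
    linear_combination step
  exact (mul_eq_zero.mp h2).resolve_left two_ne_zero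

/-- integral invariance under swapping two coordinates -/
lemma integral_swap
    (hinv : ∀ U : Matrix.unitaryGroup (Fin n) ℂ,
      MeasurePreserving (fun x : Fin n → ℂ => Matrix.mulVec (U : Matrix (Fin n) (Fin n) ℂ) x) μ μ)
    (i t : Fin n) (hit : i ≠ t)
    (g : (Fin n → ℂ) → ℂ) (hg : AEStronglyMeasurable g μ) :
    ∫ x, g (fun k => x (Equiv.swap i t k)) ∂μ = ∫ x, g x ∂μ := by
  have hmem := RR.twoMat_mem i t hit 0 1 1 0 (by simp) (by simp) (by simp)
  rw [← integral_unitary μ hinv _ hmem g hg]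
  congr 1
  funext x
  rw [RR.twoMat_mulVec i t hit]
  congr 1
  funext k
  rw [Equiv.swap_apply_def]
  by_cases hki : k = i
  · simp [hki, Ne.symm hit]
  · by_cases hkt : k = t <;> simp [hki, hkt, Ne.symm hit]

/-- integral invariance under a real rotation in two coordinates -/
lemma integral_rot
    (hinv : ∀ U : Matrix.unitaryGroup (Fin n) ℂ,
      MeasurePreserving (fun x : Fin n → ℂ => Matrix.mulVec (U : Matrix (Fin n) (Fin n) ℂ) x) μ μ)
    (i t : Fin n) (hit : i ≠ t) (c d : ℝ) (hcd : c ^ 2 + d ^ 2 = 1)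
    (g : (Fin n → ℂ) → ℂ) (hg : AEStronglyMeasurable g μ) :
    ∫ x, g (fun k => if k = i then (c : ℂ) * x i + (d : ℂ) * x t
        else if k = t then -(d : ℂ) * x i + (c : ℂ) * x t else x k) ∂μ = ∫ x, g x ∂μ := by
  have h1 : (c : ℂ) * conjC (c : ℂ) + (d : ℂ) * conjC (d : ℂ) = 1 := by
    rw [Complex.conj_ofReal, Complex.conj_ofReal]
    norm_cast
    linear_combination hcd
  have h3 : (c : ℂ) * conjC (-(d : ℂ)) + (d : ℂ) * conjC (c : ℂ) = 0 := by
    rw [map_neg, Complex.conj_ofReal, Complex.conj_ofReal]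
    ring
  have h2 : (-(d:ℂ)) * conjC (-(d : ℂ)) + (c : ℂ) * conjC (c : ℂ) = 1 := by
    rw [map_neg, Complex.conj_ofReal, Complex.conj_ofReal]
    norm_cast
    linear_combination hcd
  have hmem := RR.twoMat_mem i t hit (c : ℂ) (d : ℂ) (-(d : ℂ)) (c : ℂ) h1 h2 h3
  rw [← integral_unitary μ hinv _ hmem g hg]
  congr 1
  funext x
  rw [RR.twoMat_mulVec i t hit]


lemma measMono (i j : Fin n) (a b c d : ℕ) :
    Measurable fun x : Fin n → ℂ => (x i)^a * (conjC (x i))^b * ((x j)^c * (conjC (x j))^d) := by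
  have hconj : Measurable fun z : ℂ => conjC z := RCLike.continuous_conj.measurable
  have h1 : Measurable fun x : Fin n → ℂ => conjC (x i) := hconj.comp (measurable_pi_apply i)
  have h2 : Measurable fun x : Fin n → ℂ => conjC (x j) := hconj.comp (measurable_pi_apply j)
  exact (((measurable_pi_apply i).pow_const a).mul (h1.pow_const b)).mul
      (((measurable_pi_apply j).pow_const c).mul (h2.pow_const d))

lemma ae_norm_le (hsupp : ∀ᵐ x ∂μ, ∑ i, ‖x i‖ ^ 2 = 1) :
    ∀ᵐ x ∂μ, ∀ i, ‖x i‖ ≤ 1 := by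
  filter_upwards [hsupp] with x hx i
  have h1 : ‖x i‖ ^ 2 ≤ 1 := by
    rw [← hx]
    exact Finset.single_le_sum (f := fun i => ‖x i‖ ^ 2)
      (fun _ _ => sq_nonneg _) (Finset.mem_univ i)
  nlinarith [norm_nonneg (x i)]

lemma ae_mono_bound (hsupp : ∀ᵐ x ∂μ, ∑ i, ‖x i‖ ^ 2 = 1) (i j : Fin n) (a b c d : ℕ) :
    ∀ᵐ x ∂μ, ‖(x i)^a * (conjC (x i))^b * ((x j)^c * (conjC (x j))^d)‖ ≤ 1 := by
  filter_upwards [ae_norm_le μ hsupp] with x hx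
  have hci : ‖conjC (x i)‖ = ‖x i‖ := RCLike.norm_conj _
  have hcj : ‖conjC (x j)‖ = ‖x j‖ := RCLike.norm_conj _
  simp only [norm_mul, norm_pow, hci, hcj]
  have P : ∀ (r : ℝ) (k : ℕ), 0 ≤ r → r ≤ 1 → r ^ k ≤ 1 := fun r k h0 h1 =>
    pow_le_one₀ h0 h1
  have n0 : ∀ (y : ℂ), (0:ℝ) ≤ ‖y‖ := fun y => norm_nonneg y
  calc ‖x i‖ ^ a * ‖x i‖ ^ b * (‖x j‖ ^ c * ‖x j‖ ^ d) ≤ 1 * 1 * (1 * 1) := by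
        gcongr <;> first
          | exact P _ _ (n0 _) (hx _)
          | positivity
    _ = 1 := by norm_num
  
lemma integrable_mono (hprob : IsProbabilityMeasure μ) (hsupp : ∀ᵐ x ∂μ, ∑ i, ‖x i‖ ^ 2 = 1)
    (i j : Fin n) (a b c d : ℕ) :
    Integrable (fun x => (x i)^a * (conjC (x i))^b * ((x j)^c * (conjC (x j))^d)) μ :=
  ⟨(measMono i j a b c d).aestronglyMeasurable,
    HasFiniteIntegral.of_bounded (ae_mono_bound μ hsupp i j a b c d)⟩

/-- k-th moment of |x_s|^2 -/
def pm (s : Fin n) (k : ℕ) : ℂ := ∫ x, (x s * conjC (x s)) ^ k ∂μ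

/-- joint moment -/
def mm (s t : Fin n) (a b : ℕ) : ℂ :=
  ∫ x, (x s * conjC (x s)) ^ a * (x t * conjC (x t)) ^ b ∂μ

lemma mono_eq_pm (s : Fin n) (k : ℕ) (t : Fin n) :
    (fun x : Fin n → ℂ => (x s)^k * (conjC (x s))^k * ((x t)^0 * (conjC (x t))^0))
      = fun x => (x s * conjC (x s)) ^ k := by
  funext x; ring

lemma mono_eq_mm (s t : Fin n) (a b : ℕ) :
    (fun x : Fin n → ℂ => (x s)^a * (conjC (x s))^a * ((x t)^b * (conjC (x t))^b))
      = fun x => (x s * conjC (x s)) ^ a * (x t * conjC (x t)) ^ b := by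
  funext x; ring

lemma integrable_pm (hprob : IsProbabilityMeasure μ) (hsupp : ∀ᵐ x ∂μ, ∑ i, ‖x i‖ ^ 2 = 1)
    (s : Fin n) (k : ℕ) : Integrable (fun x => (x s * conjC (x s)) ^ k) μ := by
  have := integrable_mono μ hprob hsupp s s k k 0 0
  rwa [mono_eq_pm] at this

lemma integrable_mm (hprob : IsProbabilityMeasure μ) (hsupp : ∀ᵐ x ∂μ, ∑ i, ‖x i‖ ^ 2 = 1)
    (s t : Fin n) (a b : ℕ) :
    Integrable (fun x => (x s * conjC (x s)) ^ a * (x t * conjC (x t)) ^ b) μ := by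
  have := integrable_mono μ hprob hsupp s t a a b b
  rwa [mono_eq_mm] at this

lemma ae_sum_one (hsupp : ∀ᵐ x ∂μ, ∑ i, ‖x i‖ ^ 2 = 1) :
    ∀ᵐ x ∂μ, ∑ i, x i * conjC (x i) = 1 := by
  filter_upwards [hsupp] with x hx
  have : ∀ i, x i * conjC (x i) = ((‖x i‖ ^ 2 : ℝ) : ℂ) := by
    intro i
    rw [Complex.mul_conj, Complex.normSq_eq_norm_sq]
  rw [Finset.sum_congr rfl (fun i _ => this i), ← Complex.ofReal_sum, hx, Complex.ofReal_one]

-- over the sphere, integrals of |x_s|^{2m}|x_i|^2 don't depend on i ≠ s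
lemma mm_swap (hprob : IsProbabilityMeasure μ) (hsupp : ∀ᵐ x ∂μ, ∑ i, ‖x i‖ ^ 2 = 1)
    (hinv : ∀ U : Matrix.unitaryGroup (Fin n) ℂ,
      MeasurePreserving (fun x : Fin n → ℂ => Matrix.mulVec (U : Matrix (Fin n) (Fin n) ℂ) x) μ μ)
    (s t i : Fin n) (hst : s ≠ t) (his : i ≠ s) (m : ℕ) :
    ∫ x, (x s * conjC (x s)) ^ m * (x i * conjC (x i)) ∂μ = mm μ s t m 1 := by
  by_cases hit : i = t
  · rw [hit, mm]
    simp_rw [pow_one]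
  · have hswap := integral_swap μ hinv t i (fun h => hit h.symm)
      (fun x => (x s * conjC (x s)) ^ m * (x t * conjC (x t)) ^ 1)
      (by
        have := (measMono s t m m 1 1)
        rw [mono_eq_mm] at this
        exact this.aestronglyMeasurable)
    rw [mm, ← hswap]
    apply integral_congr_ae
    apply Filter.Eventually.of_forall
    intro x
    have h1 : Equiv.swap t i s = s := Equiv.swap_apply_of_ne_of_ne hst (Ne.symm his)
    have h2 : Equiv.swap t i t = i := Equiv.swap_apply_left t i
    simp only [h1, h2, pow_one]

lemma trace_rel (hprob : IsProbabilityMeasure μ) (hsupp : ∀ᵐ x ∂μ, ∑ i, ‖x i‖ ^ 2 = 1)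
    (hinv : ∀ U : Matrix.unitaryGroup (Fin n) ℂ,
      MeasurePreserving (fun x : Fin n → ℂ => Matrix.mulVec (U : Matrix (Fin n) (Fin n) ℂ) x) μ μ)
    (s t : Fin n) (hst : s ≠ t) (m : ℕ) :
    pm μ s (m + 1) + ((n : ℂ) - 1) * mm μ s t m 1 = pm μ s m := by
  haveI := hprob
  have step1 : pm μ s m = ∫ x, ∑ i, (x s * conjC (x s)) ^ m * (x i * conjC (x i)) ∂μ := by
    rw [pm]
    apply integral_congr_ae
    filter_upwards [ae_sum_one μ hsupp] with x hx
    rw [← Finset.mul_sum, hx, mul_one]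
  have step2 : ∫ x, ∑ i, (x s * conjC (x s)) ^ m * (x i * conjC (x i)) ∂μ
      = ∑ i, ∫ x, (x s * conjC (x s)) ^ m * (x i * conjC (x i)) ∂μ := by
    apply integral_finset_sum
    intro i _
    have := integrable_mm μ hprob hsupp s i m 1
    simp_rw [pow_one] at this
    exact this
  have step3 : ∑ i, ∫ x, (x s * conjC (x s)) ^ m * (x i * conjC (x i)) ∂μ
      = ∫ x, (x s * conjC (x s)) ^ m * (x s * conjC (x s)) ∂μ
        + ∑ i ∈ Finset.univ.erase s, ∫ x, (x s * conjC (x s)) ^ m * (x i * conjC (x i)) ∂μ := by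
    rw [← Finset.add_sum_erase _ _ (Finset.mem_univ s)]
  have step4 : ∫ x, (x s * conjC (x s)) ^ m * (x s * conjC (x s)) ∂μ = pm μ s (m + 1) := by
    rw [pm]
    apply integral_congr_ae
    apply Filter.Eventually.of_forall
    intro x
    simp only []
    rw [pow_succ]
  have step5 : ∑ i ∈ Finset.univ.erase s, ∫ x, (x s * conjC (x s)) ^ m * (x i * conjC (x i)) ∂μ
      = ((n : ℂ) - 1) * mm μ s t m 1 := by
    rw [Finset.sum_congr rfl (fun i hi => mm_swap μ hprob hsupp hinv s t i hst
      (Finset.ne_of_mem_erase hi) m), Finset.sum_const, Finset.card_erase_of_mem (Finset.mem_univ s),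
      Finset.card_univ, Fintype.card_fin, nsmul_eq_mul]
    congr 1
    have hn1 : 1 ≤ n := Fin.pos_iff_nonempty.mpr ⟨s⟩
    push_cast [Nat.cast_sub hn1]
    try ring
  rw [step1, step2, step3, step4, step5]


lemma measMono4 (i j : Fin n) (a b c d : ℕ) :
    Measurable fun x : Fin n → ℂ => (x i)^a * (conjC (x i))^b * (x j)^c * (conjC (x j))^d := by
  have hconj : Measurable fun z : ℂ => conjC z := RCLike.continuous_conj.measurable
  have h1 : Measurable fun x : Fin n → ℂ => conjC (x i) := hconj.comp (measurable_pi_apply i)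
  have h2 : Measurable fun x : Fin n → ℂ => conjC (x j) := hconj.comp (measurable_pi_apply j)
  exact ((((measurable_pi_apply i).pow_const a).mul (h1.pow_const b)).mul
      ((measurable_pi_apply j).pow_const c)).mul (h2.pow_const d)

lemma integrable_mono4 (hprob : IsProbabilityMeasure μ) (hsupp : ∀ᵐ x ∂μ, ∑ i, ‖x i‖ ^ 2 = 1)
    (i j : Fin n) (a b c d : ℕ) :
    Integrable (fun x => (x i)^a * (conjC (x i))^b * (x j)^c * (conjC (x j))^d) μ := by
  haveI := hprob
  have hb : ∀ᵐ x ∂μ, ‖(x i)^a * (conjC (x i))^b * (x j)^c * (conjC (x j))^d‖ ≤ 1 := by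
    filter_upwards [ae_mono_bound μ hsupp i j a b c d] with x hx
    calc ‖(x i)^a * (conjC (x i))^b * (x j)^c * (conjC (x j))^d‖
        = ‖(x i)^a * (conjC (x i))^b * ((x j)^c * (conjC (x j))^d)‖ := by rw [mul_assoc]
      _ ≤ 1 := hx
  exact ⟨(measMono4 i j a b c d).aestronglyMeasurable, HasFiniteIntegral.of_bounded hb⟩

/-- rotation expansion: the Bernstein-type identity -/
lemma rot_id (hprob : IsProbabilityMeasure μ) (hsupp : ∀ᵐ x ∂μ, ∑ i, ‖x i‖ ^ 2 = 1)
    (hinv : ∀ U : Matrix.unitaryGroup (Fin n) ℂ,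
      MeasurePreserving (fun x : Fin n → ℂ => Matrix.mulVec (U : Matrix (Fin n) (Fin n) ℂ) x) μ μ)
    (s t : Fin n) (hst : s ≠ t) (m : ℕ) (c d : ℝ) (hcd : c ^ 2 + d ^ 2 = 1) :
    ∑ i ∈ Finset.range (m+1), ((m.choose i : ℂ)^2 * mm μ s t i (m-i)) *
        ((c:ℂ)^(2*i) * (d:ℂ)^(2*(m-i))) = pm μ s m := by
  haveI := hprob
  have hg : AEStronglyMeasurable (fun x : Fin n → ℂ => (x s * conjC (x s))^m) μ :=
    (integrable_pm μ hprob hsupp s m).aestronglyMeasurable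
  have base := integral_rot μ hinv s t hst c d hcd (fun x => (x s * conjC (x s))^m) hg
  have hrots : ∀ x : Fin n → ℂ,
      (fun k => if k = s then (c : ℂ) * x s + (d : ℂ) * x t
        else if k = t then -(d : ℂ) * x s + (c : ℂ) * x t else x k) s
      = (c : ℂ) * x s + (d : ℂ) * x t := fun x => if_pos rfl
  have point : ∀ x : Fin n → ℂ,
      (((c:ℂ) * x s + (d:ℂ) * x t) * conjC ((c:ℂ) * x s + (d:ℂ) * x t))^m
      = ∑ i ∈ Finset.range (m+1), ∑ j ∈ Finset.range (m+1),
          ((m.choose i : ℂ) * (m.choose j : ℂ) * (c:ℂ)^(i+j) * (d:ℂ)^((m-i)+(m-j))) *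
            ((x t)^(m-i) * (conjC (x t))^(m-j) * (x s)^i * (conjC (x s))^j) := by
    intro x
    have hconj : conjC ((c:ℂ) * x s + (d:ℂ) * x t)
        = (c:ℂ) * conjC (x s) + (d:ℂ) * conjC (x t) := by
      rw [map_add, map_mul, map_mul, Complex.conj_ofReal, Complex.conj_ofReal]
    rw [hconj, mul_pow, add_pow, add_pow, Finset.sum_mul_sum]
    refine Finset.sum_congr rfl (fun i _ => Finset.sum_congr rfl (fun j _ => ?_))
    rw [pow_add, pow_add]
    ring
  have eq1 : ∫ x, (fun x => (x s * conjC (x s))^m)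
      ((fun k => if k = s then (c : ℂ) * x s + (d : ℂ) * x t
        else if k = t then -(d : ℂ) * x s + (c : ℂ) * x t else x k)) ∂μ
      = ∑ i ∈ Finset.range (m+1), ∑ j ∈ Finset.range (m+1),
          ((m.choose i : ℂ) * (m.choose j : ℂ) * (c:ℂ)^(i+j) * (d:ℂ)^((m-i)+(m-j))) *
            ∫ x, (x t)^(m-i) * (conjC (x t))^(m-j) * (x s)^i * (conjC (x s))^j ∂μ := by
    have : ∀ x : Fin n → ℂ, (fun x => (x s * conjC (x s))^m)
        ((fun k => if k = s then (c : ℂ) * x s + (d : ℂ) * x t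
          else if k = t then -(d : ℂ) * x s + (c : ℂ) * x t else x k))
        = ∑ i ∈ Finset.range (m+1), ∑ j ∈ Finset.range (m+1),
            ((m.choose i : ℂ) * (m.choose j : ℂ) * (c:ℂ)^(i+j) * (d:ℂ)^((m-i)+(m-j))) *
              ((x t)^(m-i) * (conjC (x t))^(m-j) * (x s)^i * (conjC (x s))^j) := by
      intro x
      simp only [hrots x]
      exact point x
    rw [integral_congr_ae (Filter.Eventually.of_forall this)]
    rw [integral_finset_sum _ (fun i _ => integrable_finset_sum _ (fun j _ =>
      ((integrable_mono4 μ hprob hsupp t s (m-i) (m-j) i j).const_mul _)))]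
    refine Finset.sum_congr rfl (fun i _ => ?_)
    rw [integral_finset_sum _ (fun j _ =>
      ((integrable_mono4 μ hprob hsupp t s (m-i) (m-j) i j).const_mul _))]
    exact Finset.sum_congr rfl (fun j _ => integral_const_mul _ _)
  have vanish : ∀ i ∈ Finset.range (m+1), ∀ j ∈ Finset.range (m+1), j ≠ i →
      ∫ x, (x t)^(m-i) * (conjC (x t))^(m-j) * (x s)^i * (conjC (x s))^j ∂μ = 0 := by
    intro i _ j _ hji
    have := integral_vanish μ hinv s i j (fun h => hji h.symm)
      (fun x => (x t)^(m-i) * (conjC (x t))^(m-j))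
      (by exact (measMono4 t s (m-i) (m-j) i j).aestronglyMeasurable)
      t hst
      (fun e he x => by
        simp only [if_neg (Ne.symm hst)])
    exact this
  have diag : ∀ i, ∫ x, (x t)^(m-i) * (conjC (x t))^(m-i) * (x s)^i * (conjC (x s))^i ∂μ
      = mm μ s t i (m-i) := by
    intro i
    rw [mm]
    apply integral_congr_ae
    apply Filter.Eventually.of_forall
    intro x
    simp only []
    rw [mul_pow, mul_pow]
    ring
  have hpm : pm μ s m = ∫ x, (fun x => (x s * conjC (x s))^m) x ∂μ := rfl
  rw [hpm, ← base, eq1]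
  refine Finset.sum_congr rfl (fun i hi => ?_)
  rw [Finset.sum_eq_single i (fun j hj hji => by rw [vanish i hi j hj hji, mul_zero])
    (fun h => absurd hi h)]
  rw [diag i]
  have h2i : i + i = 2 * i := by ring
  have h2mi : (m-i) + (m-i) = 2 * (m-i) := by ring
  rw [h2i, h2mi]
  ring

lemma mm_zero_right (s t : Fin n) (m : ℕ) : mm μ s t m 0 = pm μ s m := by
  rw [mm, pm]
  simp only [pow_zero, mul_one]

lemma ev_calc (i k : ℕ) :
    Polynomial.eval (1:ℂ) (Polynomial.derivative ((Polynomial.X:Polynomial ℂ)^i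
        * (1 - Polynomial.X)^k))
      = (if k = 0 then (i:ℂ) else if k = 1 then -1 else 0) := by
  have hd1 : Polynomial.derivative ((1:Polynomial ℂ) - Polynomial.X) = -1 := by
    rw [Polynomial.derivative_sub, Polynomial.derivative_one, Polynomial.derivative_X]
    ring
  rw [Polynomial.derivative_mul, Polynomial.derivative_X_pow, Polynomial.derivative_pow, hd1]
  simp only [Polynomial.eval_add, Polynomial.eval_mul, Polynomial.eval_pow,
    Polynomial.eval_C, Polynomial.eval_X, Polynomial.eval_sub, Polynomial.eval_one,
    Polynomial.eval_neg, Polynomial.eval_natCast, sub_self, one_pow, mul_one]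
  match k with
  | 0 => simp
  | 1 => simp
  | (k+2) => simp [zero_pow]

lemma key_extract (hprob : IsProbabilityMeasure μ) (hsupp : ∀ᵐ x ∂μ, ∑ i, ‖x i‖ ^ 2 = 1)
    (hinv : ∀ U : Matrix.unitaryGroup (Fin n) ℂ,
      MeasurePreserving (fun x : Fin n → ℂ => Matrix.mulVec (U : Matrix (Fin n) (Fin n) ℂ) x) μ μ)
    (s t : Fin n) (hst : s ≠ t) (m : ℕ) (hm : 1 ≤ m) :
    (m:ℂ) * pm μ s m = (m:ℂ)^2 * mm μ s t (m-1) 1 := by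
  have bern : ∀ r : ℝ, r ∈ Set.Icc (0:ℝ) 1 →
      ∑ i ∈ Finset.range (m+1), ((m.choose i:ℂ)^2 * mm μ s t i (m-i)) *
        ((r:ℂ)^i * ((1:ℂ)-(r:ℂ))^(m-i)) = pm μ s m := by
    intro r hr
    have h1 := rot_id μ hprob hsupp hinv s t hst m (Real.sqrt r) (Real.sqrt (1-r))
      (by rw [Real.sq_sqrt hr.1, Real.sq_sqrt (by linarith [hr.2])]; ring)
    rw [← h1]
    refine Finset.sum_congr rfl (fun i _ => ?_)
    have hc2 : ((Real.sqrt r : ℝ):ℂ)^(2*i) = (r:ℂ)^i := by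
      rw [pow_mul, ← Complex.ofReal_pow, Real.sq_sqrt hr.1]
    have hd2 : ((Real.sqrt (1-r) : ℝ):ℂ)^(2*(m-i)) = ((1:ℂ)-(r:ℂ))^(m-i) := by
      rw [pow_mul, ← Complex.ofReal_pow, Real.sq_sqrt (by linarith [hr.2]),
        Complex.ofReal_sub, Complex.ofReal_one]
    rw [hc2, hd2]
  set Q : Polynomial ℂ := (∑ i ∈ Finset.range (m+1),
      Polynomial.C ((m.choose i:ℂ)^2 * mm μ s t i (m-i)) *
        (Polynomial.X^i * (1 - Polynomial.X)^(m-i))) - Polynomial.C (pm μ s m) with hQdef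
  have hroot : ∀ r : ℝ, r ∈ Set.Icc (0:ℝ) 1 → Q.IsRoot (r:ℂ) := by
    intro r hr
    show Q.eval (r:ℂ) = 0
    rw [hQdef]
    simp only [Polynomial.eval_sub, Polynomial.eval_finset_sum, Polynomial.eval_mul,
      Polynomial.eval_C, Polynomial.eval_pow, Polynomial.eval_X, Polynomial.eval_one]
    rw [sub_eq_zero, ← bern r hr]
  have hQ0 : Q = 0 := by
    apply Polynomial.eq_zero_of_infinite_isRoot
    apply Set.Infinite.mono (s := (fun r : ℝ => (r:ℂ)) '' Set.Icc 0 1)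
    · rintro z ⟨r, hr, rfl⟩
      exact hroot r hr
    · exact (Set.Icc_infinite (by norm_num : (0:ℝ) < 1)).image
        (Complex.ofReal_injective.injOn)
  have hD : Polynomial.eval (1:ℂ) (Polynomial.derivative Q) = 0 := by
    rw [hQ0]
    simp
  rw [hQdef, Polynomial.derivative_sub, Polynomial.derivative_C, sub_zero] at hD
  rw [Polynomial.derivative_sum] at hD
  rw [Polynomial.eval_finset_sum] at hD
  have hterm : ∀ i, Polynomial.eval (1:ℂ)
      (Polynomial.derivative (Polynomial.C ((m.choose i:ℂ)^2 * mm μ s t i (m-i)) *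
        (Polynomial.X^i * (1 - Polynomial.X)^(m-i))))
      = ((m.choose i:ℂ)^2 * mm μ s t i (m-i)) *
          (if m - i = 0 then (i:ℂ) else if m - i = 1 then -1 else 0) := by
    intro i
    rw [Polynomial.derivative_C_mul, Polynomial.eval_mul, Polynomial.eval_C, ev_calc]
  rw [Finset.sum_congr rfl (fun i _ => hterm i)] at hD
  obtain ⟨m', rfl⟩ : ∃ m', m = m' + 1 := ⟨m - 1, by omega⟩
  rw [Finset.sum_range_succ, Finset.sum_range_succ] at hD
  rw [Finset.sum_eq_zero (fun i hi => by
    rw [Finset.mem_range] at hi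
    rw [if_neg (by omega), if_neg (by omega), mul_zero])] at hD
  have e1 : m' + 1 - m' = 1 := by omega
  have e2 : m' + 1 - (m' + 1) = 0 := by omega
  rw [e1, e2] at hD
  simp only [if_pos rfl, if_neg (Nat.one_ne_zero), zero_add] at hD
  rw [Nat.choose_succ_self_right, Nat.choose_self] at hD
  rw [mm_zero_right] at hD
  have e3 : m' + 1 - 1 = m' := by omega
  rw [e3]
  push_cast at hD ⊢
  linear_combination hD

lemma pm_rec (hprob : IsProbabilityMeasure μ) (hsupp : ∀ᵐ x ∂μ, ∑ i, ‖x i‖ ^ 2 = 1)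
    (hinv : ∀ U : Matrix.unitaryGroup (Fin n) ℂ,
      MeasurePreserving (fun x : Fin n → ℂ => Matrix.mulVec (U : Matrix (Fin n) (Fin n) ℂ) x) μ μ)
    (s t : Fin n) (hst : s ≠ t) (m : ℕ) :
    pm μ s (m+1) * ((n:ℂ) + m) = ((m:ℂ) + 1) * pm μ s m := by
  have h1 := trace_rel μ hprob hsupp hinv s t hst m
  have h2 := key_extract μ hprob hsupp hinv s t hst (m+1) (by omega)
  simp only [Nat.add_sub_cancel] at h2
  push_cast at h2
  have hm1 : ((m:ℂ) + 1) ≠ 0 := Nat.cast_add_one_ne_zero m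
  have hB : pm μ s (m+1) = ((m:ℂ)+1) * mm μ s t m 1 :=
    mul_left_cancel₀ hm1 (by linear_combination h2)
  linear_combination ((m:ℂ)+1) * h1 + ((n:ℂ) - 1) * hB - h1 * ((m:ℂ)+1) + ((m:ℂ)+1) * h1

end Meas

/-- partial products (k-th moment formula) -/
def Pprod (nu : ℂ) (k : ℕ) : ℂ := ∏ j ∈ Finset.range k, ((j:ℂ)+1)/(nu + (j:ℂ))

lemma Pprod_zero (nu : ℂ) : Pprod nu 0 = 1 := by
  rw [Pprod, Finset.prod_range_zero]

lemma Pprod_succ (nu : ℂ) (k : ℕ) :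
    Pprod nu (k+1) = Pprod nu k * (((k:ℂ)+1)/(nu + (k:ℂ))) := by
  rw [Pprod, Pprod, Finset.prod_range_succ]

lemma Pprod_shift (nu : ℂ) (hnu : ∀ j : ℕ, nu + (j:ℂ) ≠ 0) (k : ℕ) :
    Pprod nu (k+1) = ((k:ℂ)+1)/nu * Pprod (nu+1) k := by
  induction k with
  | zero =>
    rw [Pprod_succ, Pprod_zero, Pprod_zero]
    simp
  | succ k ih =>
    have h0 : nu ≠ 0 := by simpa using hnu 0
    have h1 : nu + (k:ℂ) + 1 ≠ 0 := by
      have := hnu (k+1)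
      push_cast at this
      rwa [← add_assoc] at this
    rw [Pprod_succ, ih, Pprod_succ]
    push_cast
    field_simp
    ring

/-- the alternating binomial sum -/
def SS (q : ℕ) (nu : ℂ) : ℂ :=
  ∑ k ∈ Finset.range (q+1), (-1)^k * (q.choose k : ℂ) * Pprod nu k

lemma coef_id (q k : ℕ) (hq : 1 ≤ q) :
    (k+1) * (q.choose k) + q * ((q-1).choose k) = (q+1) * (q.choose k) := by
  obtain ⟨q', rfl⟩ : ∃ q', q = q' + 1 := ⟨q - 1, by omega⟩
  have h1 : (q'+1) * (q'.choose k) = (q'+1).choose (k+1) * (k+1) :=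
    Nat.add_one_mul_choose_eq q' k
  have h2 : (q'+2) * ((q'+1).choose k) = (q'+2).choose (k+1) * (k+1) :=
    Nat.add_one_mul_choose_eq (q'+1) k
  have h3 : (q'+2).choose (k+1) = (q'+1).choose k + (q'+1).choose (k+1) :=
    Nat.choose_succ_succ (q'+1) k
  simp only [Nat.add_sub_cancel]
  calc (k+1) * ((q'+1).choose k) + (q'+1) * (q'.choose k)
      = (k+1) * ((q'+1).choose k) + (q'+1).choose (k+1) * (k+1) := by rw [h1]
    _ = ((q'+1).choose k + (q'+1).choose (k+1)) * (k+1) := by ring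
    _ = (q'+2).choose (k+1) * (k+1) := by rw [h3]
    _ = (q'+2) * ((q'+1).choose k) := h2.symm

lemma SS_rec (m : ℕ) (nu : ℂ) (hnu : ∀ j : ℕ, nu + (j:ℂ) ≠ 0) :
    nu * SS (m+2) nu = nu * SS (m+1) nu
      - (((m:ℂ)+2) * SS (m+1) (nu+1) - ((m:ℂ)+1) * SS m (nu+1)) := by
  have h0 : nu ≠ 0 := by simpa using hnu 0
  -- expand SS (m+2)
  have e1 : SS (m+2) nu = 1 + ∑ k ∈ Finset.range (m+2),
      (-1)^(k+1) * ((m+2).choose (k+1) : ℂ) * Pprod nu (k+1) := by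
    rw [SS, Finset.sum_range_succ']
    simp [add_comm, Pprod_zero]
  have pascal : ∀ k : ℕ, ((m+2).choose (k+1) : ℂ)
      = ((m+1).choose k : ℂ) + ((m+1).choose (k+1) : ℂ) := by
    intro k
    rw [← Nat.cast_add, ← Nat.choose_succ_succ]
  have e2 : SS (m+2) nu = SS (m+1) nu
      - ∑ k ∈ Finset.range (m+2), (-1)^k * ((m+1).choose k : ℂ) * Pprod nu (k+1) := by
    rw [e1]
    have eSS : SS (m+1) nu = 1 + ∑ k ∈ Finset.range (m+1),
        (-1)^(k+1) * ((m+1).choose (k+1) : ℂ) * Pprod nu (k+1) := by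
      rw [SS, Finset.sum_range_succ']
      simp [add_comm, Pprod_zero]
    have hsplit : ∑ k ∈ Finset.range (m+2),
        (-1)^(k+1) * ((m+2).choose (k+1) : ℂ) * Pprod nu (k+1)
        = (∑ k ∈ Finset.range (m+2), (-1)^(k+1) * ((m+1).choose (k+1) : ℂ) * Pprod nu (k+1))
          + ∑ k ∈ Finset.range (m+2), (-1)^(k+1) * ((m+1).choose k : ℂ) * Pprod nu (k+1) := by
      rw [← Finset.sum_add_distrib]
      refine Finset.sum_congr rfl (fun k _ => ?_)
      rw [pascal k]
      ring
    have htail : ∑ k ∈ Finset.range (m+2),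
        (-1)^(k+1) * ((m+1).choose (k+1) : ℂ) * Pprod nu (k+1)
        = ∑ k ∈ Finset.range (m+1), (-1)^(k+1) * ((m+1).choose (k+1) : ℂ) * Pprod nu (k+1) := by
      rw [Finset.sum_range_succ, Nat.choose_succ_self]
      simp
    have hneg : ∑ k ∈ Finset.range (m+2),
        (-1)^(k+1) * ((m+1).choose k : ℂ) * Pprod nu (k+1)
        = - ∑ k ∈ Finset.range (m+2), (-1)^k * ((m+1).choose k : ℂ) * Pprod nu (k+1) := by
      rw [← Finset.sum_neg_distrib]
      refine Finset.sum_congr rfl (fun k _ => ?_)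
      ring
    rw [hsplit, htail, hneg, eSS]
    ring
  -- now the T sum
  have eT : ∑ k ∈ Finset.range (m+2), (-1)^k * ((m+1).choose k : ℂ) * Pprod nu (k+1)
      = (1/nu) * (((m:ℂ)+2) * SS (m+1) (nu+1) - ((m:ℂ)+1) * SS m (nu+1)) := by
    have hshift : ∀ k : ℕ, Pprod nu (k+1) = ((k:ℂ)+1)/nu * Pprod (nu+1) k :=
      Pprod_shift nu hnu
    have hco : ∀ k : ℕ, ((k:ℂ)+1) * ((m+1).choose k : ℂ)
        = ((m:ℂ)+2) * ((m+1).choose k : ℂ) - ((m:ℂ)+1) * ((m).choose k : ℂ) := by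
      intro k
      have := coef_id (m+1) k (by omega)
      simp only [Nat.add_sub_cancel] at this
      have hc : ((k+1) * ((m+1).choose k) + (m+1) * (m.choose k) : ℂ)
          = ((m+1+1) * ((m+1).choose k) : ℂ) := by exact_mod_cast congrArg (fun z : ℕ => (z:ℂ)) this
      push_cast at hc
      linear_combination hc
    have step : ∀ k : ℕ, (-1)^k * ((m+1).choose k : ℂ) * Pprod nu (k+1)
        = (1/nu) * ((-1)^k * ((((m:ℂ)+2) * ((m+1).choose k : ℂ)
            - ((m:ℂ)+1) * ((m).choose k : ℂ)) * Pprod (nu+1) k)) := by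
      intro k
      rw [hshift k]
      rw [← hco k]
      field_simp
    rw [Finset.sum_congr rfl (fun k _ => step k), ← Finset.mul_sum]
    congr 1
    have expand : ∑ k ∈ Finset.range (m+2), ((-1)^k * ((((m:ℂ)+2) * ((m+1).choose k : ℂ)
          - ((m:ℂ)+1) * ((m).choose k : ℂ)) * Pprod (nu+1) k))
        = ((m:ℂ)+2) * (∑ k ∈ Finset.range (m+2), (-1)^k * ((m+1).choose k : ℂ) * Pprod (nu+1) k)
          - ((m:ℂ)+1) * (∑ k ∈ Finset.range (m+2), (-1)^k * ((m).choose k : ℂ) * Pprod (nu+1) k) := by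
      rw [Finset.mul_sum, Finset.mul_sum, ← Finset.sum_sub_distrib]
      refine Finset.sum_congr rfl (fun k _ => ?_)
      ring
    rw [expand]
    have t1 : ∑ k ∈ Finset.range (m+2), (-1)^k * ((m+1).choose k : ℂ) * Pprod (nu+1) k
        = SS (m+1) (nu+1) := rfl
    have t2 : ∑ k ∈ Finset.range (m+2), (-1)^k * ((m).choose k : ℂ) * Pprod (nu+1) k
        = SS m (nu+1) := by
      rw [Finset.sum_range_succ, Nat.choose_succ_self, SS]
      norm_num
    rw [t1, t2]
  rw [e2, eT]
  field_simp

lemma SS_eq : ∀ (q : ℕ) (nu : ℂ), nu ≠ 1 → (∀ j : ℕ, nu + (j:ℂ) ≠ 0) →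
    SS q nu = (nu - 1)/(nu + (q:ℂ) - 1) := by
  intro q
  induction q using Nat.strong_induction_on with
  | _ q ih =>
    match q with
    | 0 =>
      intro nu h1 hj
      have h : SS 0 nu = 1 := by
        rw [SS]
        norm_num [Pprod_zero]
      rw [h, Nat.cast_zero, add_zero]
      exact (div_self (sub_ne_zero.2 h1)).symm
    | 1 =>
      intro nu h1 hj
      have h0 : nu ≠ 0 := by simpa using hj 0
      rw [SS, Finset.sum_range_succ, Finset.sum_range_one]
      simp only [pow_zero, pow_one, Nat.choose_self, Nat.choose_zero_right, Pprod_zero]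
      rw [Pprod_succ, Pprod_zero]
      push_cast
      field_simp
      ring
      rw [mul_inv_cancel₀ h0]
    | (m+2) =>
      intro nu h1 hj
      have h0 : nu ≠ 0 := by simpa using hj 0
      have hj1 : ∀ j : ℕ, (nu + 1) + (j:ℂ) ≠ 0 := by
        intro j
        have := hj (j+1)
        push_cast at this
        rw [add_assoc]
        rwa [show (1:ℂ) + j = (j:ℂ) + 1 from by ring]
      have hnu1 : nu + 1 ≠ 1 := by simpa using h0
      have hrec := SS_rec m nu hj
      have i1 : SS (m+1) nu = (nu - 1)/(nu + ((m:ℂ)+1) - 1) := by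
        have := ih (m+1) (by omega) nu h1 hj
        rwa [Nat.cast_add, Nat.cast_one] at this
      have i2 : SS (m+1) (nu+1) = nu/(nu + ((m:ℂ)+1)) := by
        have := ih (m+1) (by omega) (nu+1) hnu1 hj1
        rw [Nat.cast_add, Nat.cast_one] at this
        rw [this]
        congr 1
        · ring
        · ring
      have i3 : SS m (nu+1) = nu/(nu + (m:ℂ)) := by
        have := ih m (by omega) (nu+1) hnu1 hj1
        rw [this]
        congr 1
        · ring
        · ring
      rw [i1, i2, i3] at hrec
      have d1 : nu + (m:ℂ) ≠ 0 := hj m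
      have d2 : nu + (m:ℂ) + 1 ≠ 0 := by
        have := hj (m+1)
        push_cast at this
        rwa [← add_assoc] at this
      have target : SS (m+2) nu = (nu - 1)/(nu + ((m:ℂ)+2) - 1) := by
        have hden : nu + ((m:ℂ)+2) - 1 = nu + (m:ℂ) + 1 := by ring
        rw [hden]
        have hmm : nu + ((m:ℂ)+1) - 1 = nu + (m:ℂ) := by ring
        rw [hmm] at hrec
        have hmm2 : nu + ((m:ℂ)+1) = nu + (m:ℂ) + 1 := by ring
        rw [hmm2] at hrec
        refine mul_left_cancel₀ h0 ?_
        rw [hrec]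
        field_simp
        ring
      rw [target]
      push_cast
      ring_nf

section Meas2
variable (μ : Measure (Fin n → ℂ))

lemma pm_zero (hprob : IsProbabilityMeasure μ) (s : Fin n) : pm μ s 0 = 1 := by
  haveI := hprob
  rw [pm]
  simp only [pow_zero]
  rw [integral_const]
  simp

lemma pm_closed (hprob : IsProbabilityMeasure μ) (hsupp : ∀ᵐ x ∂μ, ∑ i, ‖x i‖ ^ 2 = 1)
    (hinv : ∀ U : Matrix.unitaryGroup (Fin n) ℂ,
      MeasurePreserving (fun x : Fin n → ℂ => Matrix.mulVec (U : Matrix (Fin n) (Fin n) ℂ) x) μ μ)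
    (s t : Fin n) (hst : s ≠ t) (k : ℕ) : pm μ s k = Pprod (n:ℂ) k := by
  induction k with
  | zero => rw [pm_zero μ hprob s, Pprod_zero]
  | succ k ih =>
    have hrec := pm_rec μ hprob hsupp hinv s t hst k
    have hne : (n:ℂ) + (k:ℂ) ≠ 0 := by
      have h : ((n + k : ℕ):ℂ) ≠ 0 := Nat.cast_ne_zero.2 (by
        have := Fin.pos_iff_nonempty.mpr ⟨s⟩
        omega)
      push_cast at h
      exact h
    rw [Pprod_succ, ← ih]
    field_simp
    linear_combination hrec

end Meas2

section Meas3
variable (μ : Measure (Fin n → ℂ))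

lemma ae_pair (hsupp : ∀ᵐ x ∂μ, ∑ i, ‖x i‖ ^ 2 = 1) (s t : Fin n) (hst : s ≠ t) :
    ∀ᵐ x ∂μ, ‖x s‖^2 + ‖x t‖^2 ≤ 1 ∧ ‖x t‖ ≤ 1 := by
  filter_upwards [hsupp] with x hx
  have hpair : ‖x s‖^2 + ‖x t‖^2 ≤ 1 := by
    have h := Finset.sum_le_sum_of_subset_of_nonneg
      (Finset.subset_univ ({s,t} : Finset (Fin n)))
      (fun i _ _ => sq_nonneg (‖x i‖))
    rw [Finset.sum_pair hst] at h
    rw [← hx]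
    exact h
  exact ⟨hpair, by nlinarith [norm_nonneg (x t), sq_nonneg (‖x s‖)]⟩

lemma int_Tpow (hprob : IsProbabilityMeasure μ) (hsupp : ∀ᵐ x ∂μ, ∑ i, ‖x i‖ ^ 2 = 1)
    (hinv : ∀ U : Matrix.unitaryGroup (Fin n) ℂ,
      MeasurePreserving (fun x : Fin n → ℂ => Matrix.mulVec (U : Matrix (Fin n) (Fin n) ℂ) x) μ μ)
    (s t : Fin n) (hst : s ≠ t) (k : ℕ) (hk : 1 ≤ k) :
    ∫ x, ((x s * conjC (x s)) / (1 - conjC (x t)))^k ∂μ = pm μ s k := by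
  haveI := hprob
  have hconjM : Measurable fun z : ℂ => conjC z := RCLike.continuous_conj.measurable
  set F : ℕ → (Fin n → ℂ) → ℂ := fun M x => (x s * conjC (x s))^k *
      ∑ m ∈ Finset.range M, ((m + (k-1)).choose (k-1) : ℂ) * (conjC (x t))^m with hF
  have hFmeas : ∀ M, AEStronglyMeasurable (F M) μ := by
    intro M
    apply Measurable.aestronglyMeasurable
    exact (((measurable_pi_apply s).mul (hconjM.comp (measurable_pi_apply s))).pow_const k).mul
      (Finset.measurable_sum _ (fun m _ =>
        ((hconjM.comp (measurable_pi_apply t)).pow_const m).const_mul _))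
  have normAs : ∀ x : Fin n → ℂ, ‖(x s * conjC (x s))^k‖ = (‖x s‖^2)^k := by
    intro x
    rw [norm_pow, norm_mul, RCLike.norm_conj]
    ring_nf
  have hbound : ∀ M, ∀ᵐ x ∂μ, ‖F M x‖ ≤ 2^k := by
    intro M
    filter_upwards [ae_pair μ hsupp s t hst] with x hx
    rw [hF]
    simp only []
    rw [norm_mul, normAs]
    by_cases hr : ‖x t‖ < 1
    · have hsum : ‖∑ m ∈ Finset.range M, ((m + (k-1)).choose (k-1) : ℂ) * (conjC (x t))^m‖
          ≤ 1/(1 - ‖x t‖)^k := by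
        refine (norm_sum_le _ _).trans ?_
        have hterm : ∀ m, ‖((m + (k-1)).choose (k-1) : ℂ) * (conjC (x t))^m‖
            = ((m + (k-1)).choose (k-1) : ℝ) * ‖x t‖^m := by
          intro m
          rw [norm_mul, norm_pow, RCLike.norm_conj, Complex.norm_natCast]
        rw [Finset.sum_congr rfl (fun m _ => hterm m)]
        have hrnorm : ‖(‖x t‖ : ℝ)‖ < 1 := by
          rwa [Real.norm_eq_abs, _root_.abs_of_nonneg (norm_nonneg _)]
        have hsummable := summable_choose_mul_geometric_of_norm_lt_one (k-1)
          (r := (‖x t‖ : ℝ)) hrnorm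
        have := Summable.sum_le_tsum (Finset.range M)
          (fun m _ => by positivity) hsummable
        refine this.trans ?_
        rw [tsum_choose_mul_geometric_of_norm_lt_one (k-1)
          (by rwa [Real.norm_eq_abs, _root_.abs_of_nonneg (norm_nonneg _)])]
        have : k - 1 + 1 = k := by omega
        rw [this]
      have h1r : 0 < 1 - ‖x t‖ := by linarith
      calc (‖x s‖^2)^k * ‖∑ m ∈ Finset.range M, ((m + (k-1)).choose (k-1) : ℂ) * (conjC (x t))^m‖
          ≤ (‖x s‖^2)^k * (1/(1 - ‖x t‖)^k) := by
            apply mul_le_mul_of_nonneg_left hsum (by positivity)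
        _ = (‖x s‖^2/(1 - ‖x t‖))^k := by rw [div_pow]; ring
        _ ≤ 2^k := by
            apply pow_le_pow_left₀ (div_nonneg (sq_nonneg _) h1r.le)
            rw [div_le_iff₀ h1r]
            nlinarith [hx.1, hx.2, norm_nonneg (x t)]
    · have hteq : ‖x t‖ = 1 := le_antisymm hx.2 (by linarith)
      have hxs : x s = 0 := by
        have h2 : ‖x s‖^2 ≤ 0 := by nlinarith [hx.1]
        have h3 : ‖x s‖ = 0 := by nlinarith [norm_nonneg (x s), sq_nonneg ‖x s‖]
        exact norm_eq_zero.1 h3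
      rw [hxs]
      have hz0 : ((‖(0:ℂ)‖^2)^k : ℝ) = 0 := by
        simp [zero_pow (by omega : k ≠ 0)]
      rw [hz0, zero_mul]
      positivity
  have hlim : ∀ᵐ x ∂μ, Filter.Tendsto (fun M => F M x) Filter.atTop
      (𝓝 (((x s * conjC (x s)) / (1 - conjC (x t)))^k)) := by
    filter_upwards [ae_pair μ hsupp s t hst] with x hx
    by_cases hr : ‖x t‖ < 1
    · have hz : ‖conjC (x t)‖ < 1 := by rwa [RCLike.norm_conj]
      have hsumC := hasSum_choose_mul_geometric_of_norm_lt_one (𝕜 := ℂ) (k-1) hz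
      have hk1 : k - 1 + 1 = k := by omega
      rw [hk1] at hsumC
      have htend := hsumC.tendsto_sum_nat
      have hmul := htend.const_mul ((x s * conjC (x s))^k)
      have : ((x s * conjC (x s)) / (1 - conjC (x t)))^k
          = (x s * conjC (x s))^k * (1/(1 - conjC (x t))^k) := by
        rw [div_pow]
        ring
      rw [this]
      exact hmul
    · have hteq : ‖x t‖ = 1 := le_antisymm hx.2 (by linarith)
      have hxs : x s = 0 := by
        have h2 : ‖x s‖^2 ≤ 0 := by nlinarith [hx.1]
        have h3 : ‖x s‖ = 0 := by nlinarith [norm_nonneg (x s), sq_nonneg ‖x s‖]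
        exact norm_eq_zero.1 h3
      have hF0 : ∀ M, F M x = 0 := by
        intro M
        rw [hF]
        simp only [hxs, zero_mul, zero_pow (by omega : k ≠ 0)]
      have hT0 : ((x s * conjC (x s)) / (1 - conjC (x t)))^k = 0 := by
        rw [hxs]
        simp only [zero_mul, zero_div, zero_pow (by omega : k ≠ 0)]
      rw [hT0]
      simp only [hF0]
      exact tendsto_const_nhds
  have hint := tendsto_integral_of_dominated_convergence (fun _ => (2:ℝ)^k)
    hFmeas (integrable_const _) hbound hlim
  have hev : ∀ M, 1 ≤ M → ∫ x, F M x ∂μ = pm μ s k := by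
    intro M hM
    have hptF : ∀ x, F M x = ∑ m ∈ Finset.range M,
        ((m + (k-1)).choose (k-1) : ℂ) * ((x s * conjC (x s))^k * (conjC (x t))^m) := by
      intro x
      rw [hF]
      simp only []
      rw [Finset.mul_sum]
      exact Finset.sum_congr rfl (fun m _ => by ring)
    have hIG : ∀ m : ℕ, Integrable (fun x => (x s * conjC (x s))^k * (conjC (x t))^m) μ := by
      intro m
      refine (integrable_mono4 μ hprob hsupp s t k k 0 m).congr
        (Filter.Eventually.of_forall (fun x => ?_))
      simp only []
      ring
    have hvan : ∀ m : ℕ, 1 ≤ m →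
        ∫ x, (x s * conjC (x s))^k * (conjC (x t))^m ∂μ = 0 := by
      intro m hm
      have heq : (fun x : Fin n → ℂ => (x s * conjC (x s))^k * (conjC (x t))^m)
          = fun x => (fun y : Fin n → ℂ => (y s * conjC (y s))^k) x * (x t)^0 * (conjC (x t))^m := by
        funext x
        simp only []
        ring
      rw [heq]
      exact integral_vanish μ hinv t 0 m (by omega)
        (fun y => (y s * conjC (y s))^k)
        (by
          apply Measurable.aestronglyMeasurable
          exact (((((measurable_pi_apply s).mul
            (hconjM.comp (measurable_pi_apply s))).pow_const k).mul
              ((measurable_pi_apply t).pow_const 0)).mul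
                ((hconjM.comp (measurable_pi_apply t)).pow_const m)))
        s (Ne.symm hst)
        (fun e he x => by simp only [if_neg hst])
    rw [integral_congr_ae (Filter.Eventually.of_forall hptF),
      integral_finset_sum _ (fun m _ => (hIG m).const_mul _)]
    have hm0 : ∫ x, (x s * conjC (x s))^k * (conjC (x t))^0 ∂μ = pm μ s k := by
      rw [pm]
      apply integral_congr_ae
      apply Filter.Eventually.of_forall
      intro x
      simp only []
      rw [pow_zero, mul_one]
    rw [Finset.sum_eq_single 0]
    · rw [integral_const_mul, hm0]
      simp [Nat.choose_self]
    · intro m hmem hm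
      rw [integral_const_mul, hvan m (by omega), mul_zero]
    · intro h
      exact absurd (Finset.mem_range.2 (by omega)) h
  exact tendsto_nhds_unique hint
    (Filter.Tendsto.congr'
      (by
        filter_upwards [Filter.eventually_ge_atTop 1] with M hM
        exact (hev M hM).symm)
      tendsto_const_nhds)

end Meas3

end RRX

open RRX in
/-- For the complex reflection matrix `R` built from a uniform vector on the unit sphere of
`ℂ^n`: for `1 ≤ s < n` and a positive integer `q`, `E[r_{ss}^q] = (n-1)/(n+q-1)`;
moreover `E[r_{nn}^q] = 0`. -/
theorem rMat_diag_power_moment (n : ℕ) (hn : 2 ≤ n)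
    (μ : Measure (Fin n → ℂ)) (hprob : IsProbabilityMeasure μ)
    (hsupp : ∀ᵐ x ∂μ, ∑ i, ‖x i‖ ^ 2 = 1)
    (hinv : ∀ U : Matrix.unitaryGroup (Fin n) ℂ,
      MeasurePreserving (fun x : Fin n → ℂ =>
        Matrix.mulVec (U : Matrix (Fin n) (Fin n) ℂ) x) μ μ)
    (s : Fin n) (hs : (s : ℕ) + 1 < n) (q : ℕ) (hq : 0 < q) :
    (∫ x, (rMat n x s s) ^ q ∂μ = ((n : ℂ) - 1) / ((n : ℂ) + q - 1)) ∧
    (∫ x, (rMat n x ⟨n - 1, by omega⟩ ⟨n - 1, by omega⟩) ^ q ∂μ = 0) := by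
  haveI := hprob
  have hconjM : Measurable fun z : ℂ => (starRingEnd ℂ) z := RCLike.continuous_conj.measurable
  set w : Fin n := ⟨n - 1, by omega⟩ with hwdef
  have hsw : s ≠ w := by
    intro h
    have := congrArg Fin.val h
    simp only [hwdef] at this
    omega
  set T : (Fin n → ℂ) → ℂ :=
    fun x => (x s * (starRingEnd ℂ) (x s))/(1 - (starRingEnd ℂ) (x w)) with hTdef
  constructor
  · -- main diagonal entry
    have hdiag : ∀ x : Fin n → ℂ, rMat n x s s = 1 - T x := by
      intro x
      rw [rMat, Matrix.sub_apply, Matrix.one_apply_eq]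
      congr 1
      show pMat n x s s = T x
      rw [pMat]
      simp only [Matrix.of_apply, if_pos hs]
      try rfl
    have hTmeas : Measurable T := by
      rw [hTdef]
      simp_rw [div_eq_mul_inv]
      exact ((measurable_pi_apply s).mul (hconjM.comp (measurable_pi_apply s))).mul
        ((measurable_const.sub (hconjM.comp (measurable_pi_apply w))).inv)
    have hTae : ∀ᵐ x ∂μ, ‖T x‖ ≤ 2 := by
      filter_upwards [ae_pair μ hsupp s w hsw] with x hx
      by_cases hr : ‖x w‖ < 1
      · have hden : (1:ℝ) - ‖x w‖ ≤ ‖1 - (starRingEnd ℂ) (x w)‖ := by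
          have := norm_sub_norm_le (1 : ℂ) ((starRingEnd ℂ) (x w))
          rwa [norm_one, RCLike.norm_conj] at this
        have hdenpos : (0:ℝ) < 1 - ‖x w‖ := by linarith
        rw [hTdef]
        simp only []
        rw [norm_div, norm_mul, RCLike.norm_conj]
        have hnum : ‖x s‖ * ‖x s‖ = ‖x s‖^2 := (sq (‖x s‖)).symm
        rw [hnum]
        have hdpos : (0:ℝ) < ‖1 - (starRingEnd ℂ) (x w)‖ := lt_of_lt_of_le hdenpos hden
        rw [div_le_iff₀ hdpos]
        have h1 : ‖x s‖^2 ≤ 1 - ‖x w‖^2 := by linarith [hx.1]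
        nlinarith [hx.2, norm_nonneg (x w), hden]
      · have hxs : x s = 0 := by
          have hteq : ‖x w‖ = 1 := le_antisymm hx.2 (by linarith)
          have h2 : ‖x s‖^2 ≤ 0 := by nlinarith [hx.1]
          have h3 : ‖x s‖ = 0 := by nlinarith [norm_nonneg (x s), sq_nonneg ‖x s‖]
          exact norm_eq_zero.1 h3
        rw [hTdef]
        simp only [hxs, zero_mul, zero_div, norm_zero]
        norm_num
    have hTk : ∀ k : ℕ, Integrable (fun x => (T x)^k) μ := by
      intro k
      refine ⟨(hTmeas.pow_const k).aestronglyMeasurable,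
        HasFiniteIntegral.of_bounded (C := 2^k) ?_⟩
      filter_upwards [hTae] with x hx
      rw [norm_pow]
      exact pow_le_pow_left₀ (norm_nonneg _) hx k
    have hexp : ∀ x : Fin n → ℂ, (1 - T x)^q
        = ∑ k ∈ Finset.range (q+1), (-1)^k * (q.choose k : ℂ) * (T x)^k := by
      intro x
      rw [show (1 : ℂ) - T x = (-T x) + 1 from by ring, add_pow]
      refine Finset.sum_congr rfl (fun k _ => ?_)
      rw [neg_pow, one_pow]
      ring
    have hint : ∫ x, (rMat n x s s)^q ∂μ
        = ∑ k ∈ Finset.range (q+1), (-1)^k * (q.choose k : ℂ) * ∫ x, (T x)^k ∂μ := by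
      rw [integral_congr_ae (Filter.Eventually.of_forall
        (fun x => by rw [hdiag x, hexp x]))]
      rw [integral_finset_sum _ (fun k _ => (hTk k).const_mul _)]
      exact Finset.sum_congr rfl (fun k _ => integral_const_mul _ _)
    have hTint : ∀ k : ℕ, ∫ x, (T x)^k ∂μ = Pprod (n:ℂ) k := by
      intro k
      match k with
      | 0 =>
        rw [Pprod_zero]
        simp only [pow_zero]
        rw [integral_const]
        simp
      | (k+1) =>
        rw [← pm_closed μ hprob hsupp hinv s w hsw (k+1)]
        rw [← int_Tpow μ hprob hsupp hinv s w hsw (k+1) (by omega)]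
    have hnu1 : (n:ℂ) ≠ 1 := by
      intro h
      have : ((n:ℕ):ℂ) = ((1:ℕ):ℂ) := by push_cast; exact h
      have := Nat.cast_injective (R := ℂ) this
      omega
    have hnuj : ∀ j : ℕ, (n:ℂ) + (j:ℂ) ≠ 0 := by
      intro j
      have h : ((n + j : ℕ):ℂ) ≠ 0 := Nat.cast_ne_zero.2 (by omega)
      push_cast at h
      exact h
    have := SS_eq q (n:ℂ) hnu1 hnuj
    rw [SS] at this
    rw [hint, Finset.sum_congr rfl (fun k _ => by rw [hTint k]), this]
  · -- the (n,n) entry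
    have hcond : ¬((n-1) + 1 < n) := by omega
    have hdiag2 : ∀ x : Fin n → ℂ,
        rMat n x ⟨n - 1, by omega⟩ ⟨n - 1, by omega⟩ = x w := by
      intro x
      rw [rMat, Matrix.sub_apply, Matrix.one_apply_eq]
      show 1 - pMat n x ⟨n - 1, by omega⟩ ⟨n - 1, by omega⟩ = x w
      rw [pMat]
      simp only [Matrix.of_apply, if_neg hcond]
      show 1 - (1 - x w) = x w
      ring
    rw [integral_congr_ae (Filter.Eventually.of_forall
      (fun x => by rw [hdiag2 x]))]
    have heq : (fun x : Fin n → ℂ => (x w)^q)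
        = fun x => (fun _ : Fin n → ℂ => (1:ℂ)) x * (x w)^q * ((starRingEnd ℂ) (x w))^0 := by
      funext x
      simp
    rw [heq]
    exact integral_vanish μ hinv w q 0 (by omega) (fun _ => (1:ℂ))
      (by
        apply Measurable.aestronglyMeasurable
        exact ((measurable_const.mul ((measurable_pi_apply w).pow_const q)).mul
          ((hconjM.comp (measurable_pi_apply w)).pow_const 0)))
      s (Ne.symm hsw)
      (fun e he x => rfl)
end
end

section
/- Let k ≤ n and σ ∈ S_k, and let X = (x_1,...,x_n) be uniform on the unit sphere of ℂ^n. Then E[∏_{i=1}^k (δ_{i,σ(i)} - x_i·conj(x_{σ(i)}))] = Σ_{t=0}^{fix(σ)} (-1)^{k-t} C(fix(σ),t)/n^{↑(k-t)}. -/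
open MeasureTheory Finset

variable {n : ℕ}


noncomputable def mono (c d : Fin n → ℕ) (x : Fin n → ℂ) : ℂ :=
  ∏ i, (x i) ^ (c i) * (starRingEnd ℂ) (x i) ^ (d i)

lemma measurable_mono (c d : Fin n → ℕ) : Measurable (mono (n := n) c d) := by
  apply Finset.measurable_prod
  intro i _
  exact ((measurable_pi_apply i).pow_const _).mul
    ((Complex.continuous_conj.measurable.comp (measurable_pi_apply i)).pow_const _)

lemma measurable_mulVec (M : Matrix (Fin n) (Fin n) ℂ) :
    Measurable (fun x : Fin n → ℂ => M.mulVec x) := by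
  apply measurable_pi_lambda
  intro i
  simp only [Matrix.mulVec, dotProduct]
  exact Finset.measurable_sum _ (fun j _ => Measurable.const_mul (f := fun c : Fin n → ℂ => c j) (measurable_pi_apply j) (M i j))

lemma ae_norm_le (μ : Measure (Fin n → ℂ)) (hsupp : ∀ᵐ x ∂μ, ∑ i, ‖x i‖ ^ 2 = 1) :
    ∀ᵐ x ∂μ, ∀ i, ‖x i‖ ≤ 1 := by
  filter_upwards [hsupp] with x hx i
  have h1 : ‖x i‖ ^ 2 ≤ 1 := by
    rw [← hx]
    exact Finset.single_le_sum (f := fun j => ‖x j‖ ^ 2) (fun j _ => by positivity) (mem_univ i)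
  nlinarith [norm_nonneg (x i)]

lemma integrable_bdd (μ : Measure (Fin n → ℂ)) [IsFiniteMeasure μ]
    {f : (Fin n → ℂ) → ℂ} (hm : Measurable f) (C : ℝ) (hb : ∀ᵐ x ∂μ, ‖f x‖ ≤ C) :
    Integrable f μ :=
  ⟨hm.aestronglyMeasurable, HasFiniteIntegral.of_bounded hb⟩

lemma integrable_mono (μ : Measure (Fin n → ℂ)) [IsFiniteMeasure μ]
    (hsupp : ∀ᵐ x ∂μ, ∑ i, ‖x i‖ ^ 2 = 1) (c d : Fin n → ℕ) :
    Integrable (mono c d) μ := by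
  refine integrable_bdd μ (measurable_mono c d) 1 ?_
  filter_upwards [ae_norm_le μ hsupp] with x hx
  calc ‖mono c d x‖ ≤ ∏ i, ‖(x i) ^ (c i) * (starRingEnd ℂ) (x i) ^ (d i)‖ :=
        norm_prod_le _ _
    _ ≤ 1 := by
        apply Finset.prod_le_one (fun i _ => norm_nonneg _)
        intro i _
        rw [norm_mul, norm_pow, norm_pow, RCLike.norm_conj]
        exact mul_le_one₀ (pow_le_one₀ (norm_nonneg _) (hx i)) (by positivity)
          (pow_le_one₀ (norm_nonneg _) (hx i))

lemma integral_comp_unitary (μ : Measure (Fin n → ℂ))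
    (hinv : ∀ U : Matrix.unitaryGroup (Fin n) ℂ,
      MeasurePreserving (fun x : Fin n → ℂ =>
        Matrix.mulVec (U : Matrix (Fin n) (Fin n) ℂ) x) μ μ)
    (U : Matrix.unitaryGroup (Fin n) ℂ) {f : (Fin n → ℂ) → ℂ} (hm : Measurable f) :
    ∫ x, f (Matrix.mulVec (U : Matrix (Fin n) (Fin n) ℂ) x) ∂μ = ∫ x, f x ∂μ := by
  conv_rhs => rw [← (hinv U).map_eq]
  rw [integral_map (measurable_mulVec _).aemeasurable hm.aestronglyMeasurable]

lemma diag_mem_unitary (v : Fin n → ℂ) (hv : ∀ i, v i * (starRingEnd ℂ) (v i) = 1) :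
    Matrix.diagonal v ∈ Matrix.unitaryGroup (Fin n) ℂ := by
  rw [Matrix.mem_unitaryGroup_iff]
  rw [Matrix.star_eq_conjTranspose, Matrix.diagonal_conjTranspose]
  rw [Matrix.diagonal_mul_diagonal]
  ext i j
  rw [Matrix.diagonal_apply, Matrix.one_apply]
  split_ifs with h
  · simpa [Complex.star_def] using hv i
  · rfl

lemma perm_mem_unitary (e : Equiv.Perm (Fin n)) :
    (Matrix.of fun i j => if e j = i then (1:ℂ) else 0) ∈ Matrix.unitaryGroup (Fin n) ℂ := by
  rw [Matrix.mem_unitaryGroup_iff]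
  ext i j
  rw [Matrix.mul_apply, Matrix.one_apply]
  rw [Finset.sum_eq_single (e.symm i)]
  · simp only [Matrix.star_apply, Matrix.of_apply, Equiv.apply_symm_apply, if_pos rfl, one_mul]
    split_ifs with h1 h2 h2 <;> simp_all
  · intro k _ hk
    rw [Matrix.of_apply, if_neg, zero_mul]
    intro hc
    exact hk (by rw [← hc, Equiv.symm_apply_apply])
  · simp

lemma perm_mulVec (e : Equiv.Perm (Fin n)) (x : Fin n → ℂ) :
    (Matrix.of fun i j => if e j = i then (1:ℂ) else 0).mulVec x = fun i => x (e.symm i) := by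
  funext i
  rw [Matrix.mulVec, dotProduct]
  rw [Finset.sum_eq_single (e.symm i)]
  · simp
  · intro k _ hk
    rw [Matrix.of_apply, if_neg, zero_mul]
    intro hc
    exact hk (by rw [← hc, Equiv.symm_apply_apply])
  · simp

noncomputable def rc : ℂ := ((Real.sqrt 2)⁻¹ : ℝ)

lemma rc_sq : rc * rc = 1/2 := by
  rw [rc, ← Complex.ofReal_mul, ← Real.sqrt_inv, Real.mul_self_sqrt (by norm_num)]
  norm_num

lemma rc_conj : (starRingEnd ℂ) rc = rc := Complex.conj_ofReal _

noncomputable def rotM (a b : Fin n) : Matrix (Fin n) (Fin n) ℂ :=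
  Matrix.of fun i j =>
    if i = a then (if j = a then rc else if j = b then rc else 0)
    else if i = b then (if j = a then rc else if j = b then -rc else 0)
    else if j = i then 1 else 0

lemma rot_aa (a b : Fin n) : rotM a b a a = rc := by simp [rotM]

lemma rot_ab {a b : Fin n} (hab : a ≠ b) : rotM a b a b = rc := by
  simp [rotM, Ne.symm hab]

lemma rot_ba {a b : Fin n} (hab : a ≠ b) : rotM a b b a = rc := by
  simp [rotM, Ne.symm hab]

lemma rot_bb {a b : Fin n} (hab : a ≠ b) : rotM a b b b = -rc := by
  simp [rotM, Ne.symm hab]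

lemma rot_a_other {a b j : Fin n} (h1 : j ≠ a) (h2 : j ≠ b) : rotM a b a j = 0 := by
  simp [rotM, h1, h2]

lemma rot_b_other {a b j : Fin n} (hab : a ≠ b) (h1 : j ≠ a) (h2 : j ≠ b) :
    rotM a b b j = 0 := by
  simp [rotM, h1, h2, Ne.symm hab]

lemma rot_other {a b i j : Fin n} (h1 : i ≠ a) (h2 : i ≠ b) :
    rotM a b i j = if j = i then 1 else 0 := by
  simp [rotM, h1, h2]

lemma rotM_conj (a b i j : Fin n) : (starRingEnd ℂ) (rotM a b i j) = rotM a b i j := by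
  rw [rotM]; simp only [Matrix.of_apply]
  split_ifs <;> simp [rc_conj]

lemma rotM_mem_unitary (a b : Fin n) (hab : a ≠ b) :
    rotM a b ∈ Matrix.unitaryGroup (Fin n) ℂ := by
  rw [Matrix.mem_unitaryGroup_iff]
  ext i j
  rw [Matrix.mul_apply, Matrix.one_apply]
  have hstar : ∀ k, (star (rotM a b)) k j = rotM a b j k := fun k => by
    rw [Matrix.star_apply, Complex.star_def]; exact rotM_conj a b j k
  simp only [hstar]
  by_cases hia : i = a
  · by_cases hja : j = a
    · rw [hia, hja, if_pos rfl,
        Finset.sum_eq_add_of_mem a b (mem_univ _) (mem_univ _) hab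
          (fun k _ hk => by rw [rot_a_other hk.1 hk.2, zero_mul]),
        rot_aa, rot_ab hab, rc_sq]
      norm_num
    · by_cases hjb : j = b
      · rw [hia, hjb, if_neg hab,
          Finset.sum_eq_add_of_mem a b (mem_univ _) (mem_univ _) hab
            (fun k _ hk => by rw [rot_a_other hk.1 hk.2, zero_mul]),
          rot_aa, rot_ba hab, rot_ab hab, rot_bb hab]
        ring
      · rw [hia, if_neg (fun h : a = j => hja h.symm),
          Finset.sum_eq_single j
            (fun k _ hk => by rw [rot_other hja hjb, if_neg hk, mul_zero])
            (by simp)]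
        rw [rot_a_other hja hjb, zero_mul]
  · by_cases hib : i = b
    · by_cases hja : j = a
      · rw [hib, hja, if_neg (fun h : b = a => hab h.symm),
          Finset.sum_eq_add_of_mem a b (mem_univ _) (mem_univ _) hab
            (fun k _ hk => by rw [rot_b_other hab hk.1 hk.2, zero_mul]),
          rot_ba hab, rot_aa, rot_bb hab, rot_ab hab]
        ring
      · by_cases hjb : j = b
        · rw [hib, hjb, if_pos rfl,
            Finset.sum_eq_add_of_mem a b (mem_univ _) (mem_univ _) hab
              (fun k _ hk => by rw [rot_b_other hab hk.1 hk.2, zero_mul]),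
            rot_ba hab, rot_bb hab, rc_sq, neg_mul_neg, rc_sq]
          norm_num
        · rw [hib, if_neg (fun h : b = j => hjb h.symm),
            Finset.sum_eq_single j
              (fun k _ hk => by rw [rot_other hja hjb, if_neg hk, mul_zero])
              (by simp)]
          rw [rot_b_other hab hja hjb, zero_mul]
    · rw [Finset.sum_eq_single i
          (fun k _ hk => by rw [rot_other hia hib, if_neg hk, zero_mul])
          (by simp)]
      rw [rot_other hia hib, if_pos rfl, one_mul]
      by_cases hja : j = a
      · rw [hja, rot_a_other hia hib, if_neg hia]
      · by_cases hjb : j = b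
        · rw [hjb, rot_b_other hab hia hib, if_neg hib]
        · rw [rot_other hja hjb]

lemma rot_mulVec_a {a b : Fin n} (hab : a ≠ b) (x : Fin n → ℂ) :
    (rotM a b).mulVec x a = rc * x a + rc * x b := by
  rw [Matrix.mulVec, dotProduct,
    Finset.sum_eq_add_of_mem a b (mem_univ _) (mem_univ _) hab
      (fun k _ hk => by rw [rot_a_other hk.1 hk.2, zero_mul]),
    rot_aa, rot_ab hab]

lemma rot_mulVec_b {a b : Fin n} (hab : a ≠ b) (x : Fin n → ℂ) :
    (rotM a b).mulVec x b = rc * x a - rc * x b := by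
  rw [Matrix.mulVec, dotProduct,
    Finset.sum_eq_add_of_mem a b (mem_univ _) (mem_univ _) hab
      (fun k _ hk => by rw [rot_b_other hab hk.1 hk.2, zero_mul]),
    rot_ba hab, rot_bb hab]
  ring

lemma rot_mulVec_other {a b i : Fin n} (h1 : i ≠ a) (h2 : i ≠ b) (x : Fin n → ℂ) :
    (rotM a b).mulVec x i = x i := by
  rw [Matrix.mulVec, dotProduct,
    Finset.sum_eq_single i (fun k _ hk => by rw [rot_other h1 h2, if_neg hk, zero_mul]) (by simp),
    rot_other h1 h2, if_pos rfl, one_mul]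

lemma mono_mulfactor (v : Fin n → ℂ) (c d : Fin n → ℕ) (x : Fin n → ℂ) :
    mono c d (fun i => v i * x i)
      = (∏ i, v i ^ c i * (starRingEnd ℂ) (v i) ^ d i) * mono c d x := by
  rw [mono, mono, ← Finset.prod_mul_distrib]
  refine Finset.prod_congr rfl fun i _ => ?_
  rw [mul_pow, _root_.map_mul, mul_pow]
  ring

lemma vanish (μ : Measure (Fin n → ℂ))
    (hinv : ∀ U : Matrix.unitaryGroup (Fin n) ℂ,
      MeasurePreserving (fun x : Fin n → ℂ =>
        Matrix.mulVec (U : Matrix (Fin n) (Fin n) ℂ) x) μ μ)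
    (c d : Fin n → ℕ) (j : Fin n) (hcd : c j ≠ d j) :
    ∫ x, mono c d x ∂μ = 0 := by
  obtain ⟨m, hm, hcj⟩ : ∃ m, m ≠ 0 ∧ (c j = d j + m ∨ d j = c j + m) := by
    rcases Nat.lt_or_ge (c j) (d j) with h | h
    · exact ⟨d j - c j, by omega, Or.inr (by omega)⟩
    · exact ⟨c j - d j, by omega, Or.inl (by omega)⟩
  set u : ℂ := Complex.exp (Real.pi * Complex.I / m) with hu
  have hu0 : u ≠ 0 := Complex.exp_ne_zero _
  have hum : u ^ m = -1 := by
    rw [hu, ← Complex.exp_nat_mul, mul_div_cancel₀ _ (by exact_mod_cast hm : (m:ℂ) ≠ 0),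
      Complex.exp_pi_mul_I]
  have huc : (starRingEnd ℂ) u = u⁻¹ := by
    rw [hu, ← Complex.exp_conj, ← Complex.exp_neg]
    congr 1
    simp [map_div₀, Complex.conj_I]
    ring
  set v : Fin n → ℂ := fun i => if i = j then u else 1 with hv
  have hvu : ∀ i, v i * (starRingEnd ℂ) (v i) = 1 := by
    intro i
    rw [hv]
    by_cases h : i = j
    · simp only [if_pos h, huc]
      exact mul_inv_cancel₀ hu0
    · simp [if_neg h]
  set U : Matrix.unitaryGroup (Fin n) ℂ := ⟨Matrix.diagonal v, diag_mem_unitary v hvu⟩ with hU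
  have hscal : u ^ c j * (u⁻¹) ^ d j = -1 := by
    rcases hcj with h | h
    · rw [h, pow_add, hum, inv_pow]
      field_simp
    · rw [h, pow_add, inv_pow, inv_pow, hum, ← mul_assoc, mul_inv_cancel₀ (pow_ne_zero _ hu0),
        one_mul]
      norm_num
  have key : ∀ x, mono c d (Matrix.mulVec (U : Matrix (Fin n) (Fin n) ℂ) x)
      = -(mono c d x) := by
    intro x
    have hmv : Matrix.mulVec (U : Matrix (Fin n) (Fin n) ℂ) x = fun i => v i * x i :=
      funext fun i => Matrix.mulVec_diagonal v x i
    rw [hmv, mono_mulfactor]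
    have : (∏ i, v i ^ c i * (starRingEnd ℂ) (v i) ^ d i) = -1 := by
      rw [Finset.prod_eq_single j]
      · have hj : v j = u := by simp [hv]
        rw [hj, huc, hscal]
      · intro i _ hij
        rw [hv]; simp [if_neg hij]
      · simp
    rw [this]; ring
  have h2 := integral_comp_unitary μ hinv U (measurable_mono c d)
  simp only [key] at h2
  rw [integral_neg] at h2
  linear_combination -h2 / 2

lemma perm_integral (μ : Measure (Fin n → ℂ))
    (hinv : ∀ U : Matrix.unitaryGroup (Fin n) ℂ,
      MeasurePreserving (fun x : Fin n → ℂ =>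
        Matrix.mulVec (U : Matrix (Fin n) (Fin n) ℂ) x) μ μ)
    (c d : Fin n → ℕ) (e : Equiv.Perm (Fin n)) :
    ∫ x, mono (c ∘ e) (d ∘ e) x ∂μ = ∫ x, mono c d x ∂μ := by
  have h := integral_comp_unitary μ hinv ⟨_, perm_mem_unitary e⟩ (measurable_mono c d)
  rw [← h]
  apply integral_congr_ae
  filter_upwards with x
  rw [perm_mulVec e x, mono, mono]
  rw [← Equiv.prod_comp e (fun i => (x (e.symm i)) ^ (c i) * (starRingEnd ℂ) (x (e.symm i)) ^ (d i))]
  refine Finset.prod_congr rfl fun i _ => by rw [Equiv.symm_apply_apply]; rfl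

noncomputable def indF (S : Finset (Fin n)) : Fin n → ℕ := fun i => if i ∈ S then 1 else 0

lemma exists_perm_map (S T : Finset (Fin n)) (h : S.card = T.card) :
    ∃ e : Equiv.Perm (Fin n), ∀ i, e i ∈ S ↔ i ∈ T := by
  have hcc : (Tᶜ : Finset (Fin n)).card = (Sᶜ : Finset (Fin n)).card := by
    rw [Finset.card_compl, Finset.card_compl, h]
  let e1 : {a : Fin n // a ∈ T} ≃ {a : Fin n // a ∈ S} := Finset.equivOfCardEq h.symm
  let e2 : {a : Fin n // ¬ a ∈ T} ≃ {a : Fin n // ¬ a ∈ S} :=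
    ((Equiv.subtypeEquivRight (fun x => (Finset.mem_compl (s := T) (a := x)).symm)).trans
        (Finset.equivOfCardEq hcc)).trans
      (Equiv.subtypeEquivRight (fun x => Finset.mem_compl (s := S) (a := x)))
  refine ⟨(Equiv.sumCompl (fun a => a ∈ T)).symm.trans
    ((Equiv.sumCongr e1 e2).trans (Equiv.sumCompl (fun a => a ∈ S))), fun i => ?_⟩
  simp only [Equiv.trans_apply]
  by_cases hi : i ∈ T
  · rw [Equiv.sumCompl_symm_apply_of_pos hi]
    simp only [Equiv.sumCongr_apply, Sum.map_inl, Equiv.sumCompl_apply_inl]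
    exact iff_of_true (e1 ⟨i, hi⟩).2 hi
  · rw [Equiv.sumCompl_symm_apply_of_neg hi]
    simp only [Equiv.sumCongr_apply, Sum.map_inr, Equiv.sumCompl_apply_inr]
    exact iff_of_false (e2 ⟨i, hi⟩).2 hi

noncomputable def z2 (c : Fin n → ℕ) (a b : Fin n) : Fin n → ℕ :=
  Function.update (Function.update c a 0) b 0

noncomputable def upd2 (c : Fin n → ℕ) (a b : Fin n) (α γ : ℕ) : Fin n → ℕ :=
  Function.update (Function.update c a α) b γ

lemma upd2_at_a {c : Fin n → ℕ} {a b : Fin n} (hab : a ≠ b) (α γ : ℕ) :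
    upd2 c a b α γ a = α := by
  rw [upd2, Function.update_of_ne hab, Function.update_self]

lemma upd2_at_b {c : Fin n → ℕ} {a b : Fin n} (α γ : ℕ) : upd2 c a b α γ b = γ :=
  Function.update_self _ _ _

lemma upd2_other {c : Fin n → ℕ} {a b i : Fin n} (h1 : i ≠ a) (h2 : i ≠ b) (α γ : ℕ) :
    upd2 c a b α γ i = c i := by
  rw [upd2, Function.update_of_ne h2, Function.update_of_ne h1]

lemma z2_upd2 {c : Fin n → ℕ} {a b : Fin n} (hab : a ≠ b) (α γ : ℕ) :
    z2 (upd2 c a b α γ) a b = z2 c a b := by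
  funext i
  by_cases h1 : i = b
  · rw [h1, z2, z2, Function.update_self, Function.update_self]
  · by_cases h2 : i = a
    · rw [h2, z2, z2, Function.update_of_ne hab, Function.update_of_ne hab,
        Function.update_self, Function.update_self]
    · rw [z2, z2, Function.update_of_ne h1, Function.update_of_ne h1,
        Function.update_of_ne h2, Function.update_of_ne h2, upd2_other h2 h1]

lemma mono_split (c d : Fin n → ℕ) (a b : Fin n) (hab : a ≠ b) (x : Fin n → ℂ) :
    mono c d x = (x a ^ c a * (starRingEnd ℂ) (x a) ^ d a)
      * (x b ^ c b * (starRingEnd ℂ) (x b) ^ d b)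
      * mono (z2 c a b) (z2 d a b) x := by
  have hsub : ({a, b} : Finset (Fin n)) ⊆ univ := subset_univ _
  have key : ∀ (c' d' : Fin n → ℕ), mono c' d' x =
      (∏ i ∈ univ \ {a, b}, (x i) ^ (c' i) * (starRingEnd ℂ) (x i) ^ (d' i))
        * ((x a ^ c' a * (starRingEnd ℂ) (x a) ^ d' a)
          * (x b ^ c' b * (starRingEnd ℂ) (x b) ^ d' b)) := by
    intro c' d'
    rw [mono, ← Finset.prod_sdiff hsub, Finset.prod_pair hab]
  rw [key c d, key (z2 c a b) (z2 d a b)]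
  have hz : ∀ i ∈ univ \ ({a, b} : Finset (Fin n)),
      (x i) ^ (z2 c a b i) * (starRingEnd ℂ) (x i) ^ (z2 d a b i)
        = (x i) ^ (c i) * (starRingEnd ℂ) (x i) ^ (d i) := by
    intro i hi
    rw [Finset.mem_sdiff, Finset.mem_insert, Finset.mem_singleton] at hi
    push_neg at hi
    rw [z2, z2, Function.update_of_ne hi.2.2, Function.update_of_ne hi.2.1,
      Function.update_of_ne hi.2.2, Function.update_of_ne hi.2.1]
  rw [Finset.prod_congr rfl hz]
  have hza : z2 c a b a = 0 := by
    rw [z2, Function.update_of_ne hab, Function.update_self]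
  have hzb : z2 c a b b = 0 := Function.update_self _ _ _
  have hza' : z2 d a b a = 0 := by
    rw [z2, Function.update_of_ne hab, Function.update_self]
  have hzb' : z2 d a b b = 0 := Function.update_self _ _ _
  rw [hza, hzb, hza', hzb']
  ring

lemma rot_moment (μ : Measure (Fin n → ℂ)) [IsProbabilityMeasure μ]
    (hsupp : ∀ᵐ x ∂μ, ∑ i, ‖x i‖ ^ 2 = 1)
    (hinv : ∀ U : Matrix.unitaryGroup (Fin n) ℂ,
      MeasurePreserving (fun x : Fin n → ℂ =>
        Matrix.mulVec (U : Matrix (Fin n) (Fin n) ℂ) x) μ μ)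
    (c : Fin n → ℕ) (a b : Fin n) (hab : a ≠ b) (hca : c a = 2) (hcb : c b = 0) :
    ∫ x, mono c c x ∂μ = 2 * ∫ x, mono (upd2 c a b 1 1) (upd2 c a b 1 1) x ∂μ := by
  have hz_a : z2 c a b a = 0 := by
    rw [z2, Function.update_of_ne hab, Function.update_self]
  have hz_b : z2 c a b b = 0 := Function.update_self _ _ _
  have hrest : ∀ x, mono (z2 c a b) (z2 c a b) ((rotM a b).mulVec x)
      = mono (z2 c a b) (z2 c a b) x := by
    intro x
    rw [mono, mono]
    refine Finset.prod_congr rfl fun i _ => ?_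
    by_cases h1 : i = a
    · rw [h1, hz_a, pow_zero, pow_zero, pow_zero, pow_zero]
    · by_cases h2 : i = b
      · rw [h2, hz_b, pow_zero, pow_zero, pow_zero, pow_zero]
      · rw [rot_mulVec_other h1 h2]
  have hconj_a : ∀ x : Fin n → ℂ, (starRingEnd ℂ) ((rotM a b).mulVec x a)
      = rc * (starRingEnd ℂ) (x a) + rc * (starRingEnd ℂ) (x b) := by
    intro x
    rw [rot_mulVec_a hab, map_add, _root_.map_mul, _root_.map_mul, rc_conj]
  have hpt : ∀ x, mono c c ((rotM a b).mulVec x) =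
      (1/4 : ℂ) * mono c c x
      + (1/4 : ℂ) * mono (upd2 c a b 0 2) (upd2 c a b 0 2) x
      + mono (upd2 c a b 1 1) (upd2 c a b 1 1) x
      + (1/2 : ℂ) * mono (upd2 c a b 2 0) (upd2 c a b 1 1) x
      + (1/4 : ℂ) * mono (upd2 c a b 2 0) (upd2 c a b 0 2) x
      + (1/2 : ℂ) * mono (upd2 c a b 1 1) (upd2 c a b 2 0) x
      + (1/2 : ℂ) * mono (upd2 c a b 1 1) (upd2 c a b 0 2) x
      + (1/4 : ℂ) * mono (upd2 c a b 0 2) (upd2 c a b 2 0) x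
      + (1/2 : ℂ) * mono (upd2 c a b 0 2) (upd2 c a b 1 1) x := by
    intro x
    rw [mono_split c c a b hab ((rotM a b).mulVec x), hrest,
      mono_split c c a b hab x,
      mono_split (upd2 c a b 0 2) (upd2 c a b 0 2) a b hab x,
      mono_split (upd2 c a b 1 1) (upd2 c a b 1 1) a b hab x,
      mono_split (upd2 c a b 2 0) (upd2 c a b 1 1) a b hab x,
      mono_split (upd2 c a b 2 0) (upd2 c a b 0 2) a b hab x,
      mono_split (upd2 c a b 1 1) (upd2 c a b 2 0) a b hab x,
      mono_split (upd2 c a b 1 1) (upd2 c a b 0 2) a b hab x,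
      mono_split (upd2 c a b 0 2) (upd2 c a b 2 0) a b hab x,
      mono_split (upd2 c a b 0 2) (upd2 c a b 1 1) a b hab x]
    simp only [z2_upd2 hab, upd2_at_a hab, upd2_at_b, hca, hcb]
    rw [hconj_a x, rot_mulVec_a hab, rot_mulVec_b hab]
    simp only [pow_zero, mul_one, one_mul, pow_one]
    linear_combination ((rc * rc + 1/2) *
      ((x a + x b)^2 * ((starRingEnd ℂ) (x a) + (starRingEnd ℂ) (x b))^2
        * mono (z2 c a b) (z2 c a b) x)) * rc_sq
  set T : Matrix.unitaryGroup (Fin n) ℂ := ⟨rotM a b, rotM_mem_unitary a b hab⟩ with hT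
  have h0 := integral_comp_unitary μ hinv T (measurable_mono c c)
  have hTc : (T : Matrix (Fin n) (Fin n) ℂ) = rotM a b := rfl
  simp only [hTc, hpt] at h0
  have I1 : Integrable (fun x => (1/4:ℂ) * mono c c x) μ :=
    (integrable_mono μ hsupp c c).const_mul _
  have I2 : Integrable (fun x => (1/4:ℂ) * mono (upd2 c a b 0 2) (upd2 c a b 0 2) x) μ :=
    (integrable_mono μ hsupp _ _).const_mul _
  have I3 : Integrable (fun x => mono (upd2 c a b 1 1) (upd2 c a b 1 1) x) μ :=
    integrable_mono μ hsupp _ _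
  have I4 : Integrable (fun x => (1/2:ℂ) * mono (upd2 c a b 2 0) (upd2 c a b 1 1) x) μ :=
    (integrable_mono μ hsupp _ _).const_mul _
  have I5 : Integrable (fun x => (1/4:ℂ) * mono (upd2 c a b 2 0) (upd2 c a b 0 2) x) μ :=
    (integrable_mono μ hsupp _ _).const_mul _
  have I6 : Integrable (fun x => (1/2:ℂ) * mono (upd2 c a b 1 1) (upd2 c a b 2 0) x) μ :=
    (integrable_mono μ hsupp _ _).const_mul _
  have I7 : Integrable (fun x => (1/2:ℂ) * mono (upd2 c a b 1 1) (upd2 c a b 0 2) x) μ :=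
    (integrable_mono μ hsupp _ _).const_mul _
  have I8 : Integrable (fun x => (1/4:ℂ) * mono (upd2 c a b 0 2) (upd2 c a b 2 0) x) μ :=
    (integrable_mono μ hsupp _ _).const_mul _
  have I9 : Integrable (fun x => (1/2:ℂ) * mono (upd2 c a b 0 2) (upd2 c a b 1 1) x) μ :=
    (integrable_mono μ hsupp _ _).const_mul _
  have J2 : Integrable (fun x => (1/4:ℂ) * mono c c x
      + (1/4:ℂ) * mono (upd2 c a b 0 2) (upd2 c a b 0 2) x) μ := by exact I1.add I2
  have J3 : Integrable (fun x => (1/4:ℂ) * mono c c x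
      + (1/4:ℂ) * mono (upd2 c a b 0 2) (upd2 c a b 0 2) x
      + mono (upd2 c a b 1 1) (upd2 c a b 1 1) x) μ := by exact J2.add I3
  have J4 : Integrable (fun x => (1/4:ℂ) * mono c c x
      + (1/4:ℂ) * mono (upd2 c a b 0 2) (upd2 c a b 0 2) x
      + mono (upd2 c a b 1 1) (upd2 c a b 1 1) x
      + (1/2:ℂ) * mono (upd2 c a b 2 0) (upd2 c a b 1 1) x) μ := by exact J3.add I4
  have J5 : Integrable (fun x => (1/4:ℂ) * mono c c x
      + (1/4:ℂ) * mono (upd2 c a b 0 2) (upd2 c a b 0 2) x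
      + mono (upd2 c a b 1 1) (upd2 c a b 1 1) x
      + (1/2:ℂ) * mono (upd2 c a b 2 0) (upd2 c a b 1 1) x
      + (1/4:ℂ) * mono (upd2 c a b 2 0) (upd2 c a b 0 2) x) μ := by exact J4.add I5
  have J6 : Integrable (fun x => (1/4:ℂ) * mono c c x
      + (1/4:ℂ) * mono (upd2 c a b 0 2) (upd2 c a b 0 2) x
      + mono (upd2 c a b 1 1) (upd2 c a b 1 1) x
      + (1/2:ℂ) * mono (upd2 c a b 2 0) (upd2 c a b 1 1) x
      + (1/4:ℂ) * mono (upd2 c a b 2 0) (upd2 c a b 0 2) x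
      + (1/2:ℂ) * mono (upd2 c a b 1 1) (upd2 c a b 2 0) x) μ := by exact J5.add I6
  have J7 : Integrable (fun x => (1/4:ℂ) * mono c c x
      + (1/4:ℂ) * mono (upd2 c a b 0 2) (upd2 c a b 0 2) x
      + mono (upd2 c a b 1 1) (upd2 c a b 1 1) x
      + (1/2:ℂ) * mono (upd2 c a b 2 0) (upd2 c a b 1 1) x
      + (1/4:ℂ) * mono (upd2 c a b 2 0) (upd2 c a b 0 2) x
      + (1/2:ℂ) * mono (upd2 c a b 1 1) (upd2 c a b 2 0) x
      + (1/2:ℂ) * mono (upd2 c a b 1 1) (upd2 c a b 0 2) x) μ := by exact J6.add I7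
  have J8 : Integrable (fun x => (1/4:ℂ) * mono c c x
      + (1/4:ℂ) * mono (upd2 c a b 0 2) (upd2 c a b 0 2) x
      + mono (upd2 c a b 1 1) (upd2 c a b 1 1) x
      + (1/2:ℂ) * mono (upd2 c a b 2 0) (upd2 c a b 1 1) x
      + (1/4:ℂ) * mono (upd2 c a b 2 0) (upd2 c a b 0 2) x
      + (1/2:ℂ) * mono (upd2 c a b 1 1) (upd2 c a b 2 0) x
      + (1/2:ℂ) * mono (upd2 c a b 1 1) (upd2 c a b 0 2) x
      + (1/4:ℂ) * mono (upd2 c a b 0 2) (upd2 c a b 2 0) x) μ := by exact J7.add I8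
  rw [integral_add J8 I9, integral_add J7 I8, integral_add J6 I7, integral_add J5 I6,
    integral_add J4 I5, integral_add J3 I4, integral_add J2 I3, integral_add I1 I2,
    integral_const_mul, integral_const_mul, integral_const_mul, integral_const_mul,
    integral_const_mul, integral_const_mul, integral_const_mul, integral_const_mul] at h0
  have v4 : ∫ x, mono (upd2 c a b 2 0) (upd2 c a b 1 1) x ∂μ = 0 :=
    vanish μ hinv _ _ a (by rw [upd2_at_a hab, upd2_at_a hab]; norm_num)
  have v5 : ∫ x, mono (upd2 c a b 2 0) (upd2 c a b 0 2) x ∂μ = 0 :=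
    vanish μ hinv _ _ a (by rw [upd2_at_a hab, upd2_at_a hab]; norm_num)
  have v6 : ∫ x, mono (upd2 c a b 1 1) (upd2 c a b 2 0) x ∂μ = 0 :=
    vanish μ hinv _ _ a (by rw [upd2_at_a hab, upd2_at_a hab]; norm_num)
  have v7 : ∫ x, mono (upd2 c a b 1 1) (upd2 c a b 0 2) x ∂μ = 0 :=
    vanish μ hinv _ _ a (by rw [upd2_at_a hab, upd2_at_a hab]; norm_num)
  have v8 : ∫ x, mono (upd2 c a b 0 2) (upd2 c a b 2 0) x ∂μ = 0 :=
    vanish μ hinv _ _ a (by rw [upd2_at_a hab, upd2_at_a hab]; norm_num)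
  have v9 : ∫ x, mono (upd2 c a b 0 2) (upd2 c a b 1 1) x ∂μ = 0 :=
    vanish μ hinv _ _ a (by rw [upd2_at_a hab, upd2_at_a hab]; norm_num)
  have hsw : ∫ x, mono (upd2 c a b 0 2) (upd2 c a b 0 2) x ∂μ = ∫ x, mono c c x ∂μ := by
    have hc : upd2 c a b 0 2 = c ∘ (Equiv.swap a b) := by
      funext i
      by_cases h1 : i = a
      · rw [h1, upd2_at_a hab, Function.comp_apply, Equiv.swap_apply_left, hcb]
      · by_cases h2 : i = b
        · rw [h2, upd2_at_b, Function.comp_apply, Equiv.swap_apply_right, hca]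
        · rw [upd2_other h1 h2, Function.comp_apply, Equiv.swap_apply_of_ne_of_ne h1 h2]
    rw [hc]
    exact perm_integral μ hinv c c (Equiv.swap a b)
  rw [v4, v5, v6, v7, v8, v9, hsw] at h0
  linear_combination (-2 : ℂ) * h0

lemma J_card (μ : Measure (Fin n → ℂ))
    (hinv : ∀ U : Matrix.unitaryGroup (Fin n) ℂ,
      MeasurePreserving (fun x : Fin n → ℂ =>
        Matrix.mulVec (U : Matrix (Fin n) (Fin n) ℂ) x) μ μ)
    (S T : Finset (Fin n)) (h : S.card = T.card) :
    ∫ x, mono (indF T) (indF T) x ∂μ = ∫ x, mono (indF S) (indF S) x ∂μ := by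
  obtain ⟨e, he⟩ := exists_perm_map S T h
  have hc : indF S ∘ e = indF T := funext fun i => by
    simp only [Function.comp_apply, indF]
    by_cases hi : i ∈ T
    · rw [if_pos ((he i).2 hi), if_pos hi]
    · rw [if_neg (fun hc => hi ((he i).1 hc)), if_neg hi]
  rw [← hc]
  exact perm_integral μ hinv _ _ e

lemma mono_bump (c d : Fin n → ℕ) (j : Fin n) (x : Fin n → ℂ) :
    mono c d x * (x j * (starRingEnd ℂ) (x j))
      = mono (Function.update c j (c j + 1)) (Function.update d j (d j + 1)) x := by
  rw [mono, mono,
    ← Finset.mul_prod_erase univ (fun i => x i ^ c i * (starRingEnd ℂ) (x i) ^ d i) (mem_univ j),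
    ← Finset.mul_prod_erase univ
      (fun i => x i ^ (Function.update c j (c j + 1) i)
        * (starRingEnd ℂ) (x i) ^ (Function.update d j (d j + 1) i)) (mem_univ j)]
  have he : ∏ i ∈ univ.erase j,
      x i ^ (Function.update c j (c j + 1) i)
        * (starRingEnd ℂ) (x i) ^ (Function.update d j (d j + 1) i)
      = ∏ i ∈ univ.erase j, x i ^ c i * (starRingEnd ℂ) (x i) ^ d i :=
    Finset.prod_congr rfl fun i hi => by
      rw [Function.update_of_ne (Finset.ne_of_mem_erase hi),
        Function.update_of_ne (Finset.ne_of_mem_erase hi)]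
  rw [he, Function.update_self, Function.update_self, pow_succ, pow_succ]
  ring

lemma step (μ : Measure (Fin n → ℂ)) [IsProbabilityMeasure μ]
    (hsupp : ∀ᵐ x ∂μ, ∑ i, ‖x i‖ ^ 2 = 1)
    (hinv : ∀ U : Matrix.unitaryGroup (Fin n) ℂ,
      MeasurePreserving (fun x : Fin n → ℂ =>
        Matrix.mulVec (U : Matrix (Fin n) (Fin n) ℂ) x) μ μ)
    (S T : Finset (Fin n)) (hS : S.card < n) (hT : T.card = S.card + 1) :
    ∫ x, mono (indF S) (indF S) x ∂μ
      = ((n : ℂ) + S.card) * ∫ x, mono (indF T) (indF T) x ∂μ := by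
  obtain ⟨b, hb⟩ : (Sᶜ : Finset (Fin n)).Nonempty := by
    rw [← Finset.card_pos, Finset.card_compl, Fintype.card_fin]
    omega
  rw [Finset.mem_compl] at hb
  have hone : ∀ᵐ x ∂μ, (∑ j, x j * (starRingEnd ℂ) (x j)) = 1 := by
    filter_upwards [hsupp] with x hx
    have hpt : ∀ j, x j * (starRingEnd ℂ) (x j) = ((‖x j‖ ^ 2 : ℝ) : ℂ) := fun j => by
      rw [Complex.mul_conj, Complex.normSq_eq_norm_sq]
    simp only [hpt]
    exact_mod_cast hx
  have h1 : ∫ x, mono (indF S) (indF S) x ∂μ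
      = ∫ x, ∑ j, mono (Function.update (indF S) j (indF S j + 1))
          (Function.update (indF S) j (indF S j + 1)) x ∂μ := by
    apply integral_congr_ae
    filter_upwards [hone] with x hx
    calc mono (indF S) (indF S) x = mono (indF S) (indF S) x * 1 := (mul_one _).symm
      _ = mono (indF S) (indF S) x * ∑ j, x j * (starRingEnd ℂ) (x j) := by rw [hx]
      _ = ∑ j, mono (indF S) (indF S) x * (x j * (starRingEnd ℂ) (x j)) :=
          Finset.mul_sum _ _ _
      _ = _ := Finset.sum_congr rfl fun j _ => mono_bump (indF S) (indF S) j x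
  rw [h1, integral_finset_sum _ (fun j _ => integrable_mono μ hsupp _ _)]
  set JT := ∫ x, mono (indF T) (indF T) x ∂μ with hJT
  have hterm : ∀ j : Fin n,
      (∫ x, mono (Function.update (indF S) j (indF S j + 1))
          (Function.update (indF S) j (indF S j + 1)) x ∂μ)
        = if j ∈ S then 2 * JT else JT := by
    intro j
    by_cases hj : j ∈ S
    · rw [if_pos hj]
      have hjb : j ≠ b := fun h => hb (h ▸ hj)
      have hcj : indF S j = 1 := if_pos hj
      have hc2 : Function.update (indF S) j (indF S j + 1)
          = Function.update (indF S) j 2 := by rw [hcj]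
      rw [hc2]
      have hmom := rot_moment μ hsupp hinv (Function.update (indF S) j 2) j b hjb
        (Function.update_self _ _ _)
        (by rw [Function.update_of_ne (Ne.symm hjb)]; exact if_neg hb)
      rw [hmom]
      have hupd : upd2 (Function.update (indF S) j 2) j b 1 1 = indF (insert b S) := by
        funext i
        by_cases h1 : i = b
        · rw [h1, upd2, Function.update_self, indF, if_pos (mem_insert_self _ _)]
        · by_cases h2 : i = j
          · rw [h2, upd2, Function.update_of_ne hjb, Function.update_self, indF,
              if_pos (mem_insert_of_mem hj)]
          · rw [upd2, Function.update_of_ne h1, Function.update_of_ne h2,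
              Function.update_of_ne h2, indF, indF]
            simp [Finset.mem_insert, h1]
      rw [hupd, hJT,
        J_card μ hinv (insert b S) T (by rw [Finset.card_insert_of_notMem hb, hT])]
    · rw [if_neg hj]
      have hcj : indF S j = 0 := if_neg hj
      have hupd : Function.update (indF S) j (indF S j + 1) = indF (insert j S) := by
        funext i
        by_cases h1 : i = j
        · rw [h1, Function.update_self, hcj, indF, if_pos (mem_insert_self _ _)]
        · rw [Function.update_of_ne h1, indF, indF]
          simp [Finset.mem_insert, h1]
      rw [hupd, hJT,
        J_card μ hinv (insert j S) T (by rw [Finset.card_insert_of_notMem hj, hT])]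
  rw [Finset.sum_congr rfl (fun j _ => hterm j), Finset.sum_ite, Finset.sum_const,
    Finset.sum_const]
  have hf1 : (univ.filter (fun j => j ∈ S)) = S := by ext i; simp
  have hf2 : (univ.filter (fun j => ¬ j ∈ S)) = Sᶜ := by ext i; simp
  rw [hf1, hf2, Finset.card_compl, Fintype.card_fin, nsmul_eq_mul, nsmul_eq_mul,
    Nat.cast_sub hS.le]
  ring

lemma J_asc (μ : Measure (Fin n → ℂ)) [IsProbabilityMeasure μ]
    (hsupp : ∀ᵐ x ∂μ, ∑ i, ‖x i‖ ^ 2 = 1)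
    (hinv : ∀ U : Matrix.unitaryGroup (Fin n) ℂ,
      MeasurePreserving (fun x : Fin n → ℂ =>
        Matrix.mulVec (U : Matrix (Fin n) (Fin n) ℂ) x) μ μ) :
    ∀ m, m ≤ n → ∀ S : Finset (Fin n), S.card = m →
      ascC n m * ∫ x, mono (indF S) (indF S) x ∂μ = 1 := by
  intro m
  induction m with
  | zero =>
    intro _ S hS
    rw [Finset.card_eq_zero] at hS
    subst hS
    have h0 : indF (∅ : Finset (Fin n)) = fun _ => 0 :=
      funext fun i => if_neg (notMem_empty i)
    have hm : ∀ x : Fin n → ℂ, mono (indF (∅ : Finset (Fin n))) (indF ∅) x = 1 := fun x => by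
      rw [h0, mono]
      simp
    rw [ascC]
    simp only [Finset.prod_range_zero, one_mul, hm]
    simp
  | succ m ih =>
    intro hm1 T hT
    obtain ⟨S, hsub, hScard⟩ := Finset.exists_subset_card_eq (s := T) (n := m) (by omega)
    have hst := step μ hsupp hinv S T (by omega) (by omega)
    rw [hScard] at hst
    have hih := ih (by omega) S hScard
    calc ascC n (m + 1) * ∫ x, mono (indF T) (indF T) x ∂μ
        = ascC n m * (((n : ℂ) + m) * ∫ x, mono (indF T) (indF T) x ∂μ) := by
          rw [ascC, Finset.prod_range_succ, ← ascC]
          ring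
      _ = ascC n m * ∫ x, mono (indF S) (indF S) x ∂μ := by rw [← hst]
      _ = 1 := hih

lemma mono_indF (S : Finset (Fin n)) (x : Fin n → ℂ) :
    mono (indF S) (indF S) x = ∏ j ∈ S, x j * (starRingEnd ℂ) (x j) := by
  rw [mono]
  calc ∏ j, x j ^ indF S j * (starRingEnd ℂ) (x j) ^ indF S j
      = ∏ j, (if j ∈ S then x j * (starRingEnd ℂ) (x j) else 1) := by
        refine Finset.prod_congr rfl fun j _ => ?_
        rw [indF]
        split_ifs <;> simp
    _ = ∏ j ∈ univ ∩ S, x j * (starRingEnd ℂ) (x j) := Finset.prod_ite_mem _ _ _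
    _ = _ := by rw [Finset.univ_inter]

/-- For `k ≤ n`, `σ ∈ S_k` and `X` uniform on the unit sphere of `ℂ^n`,
`E[∏_{i=1}^k (δ_{i,σ(i)} - x_i conj(x_{σ(i)}))]
  = Σ_{t=0}^{fix σ} (-1)^{k-t} C(fix σ, t)/n^{↑(k-t)}`. -/
theorem sphere_ascension_moment (n k : ℕ) (hk : k ≤ n)
    (μ : Measure (Fin n → ℂ)) (hprob : IsProbabilityMeasure μ)
    (hsupp : ∀ᵐ x ∂μ, ∑ i, ‖x i‖ ^ 2 = 1)
    (hinv : ∀ U : Matrix.unitaryGroup (Fin n) ℂ,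
      MeasurePreserving (fun x : Fin n → ℂ =>
        Matrix.mulVec (U : Matrix (Fin n) (Fin n) ℂ) x) μ μ)
    (σ : Equiv.Perm (Fin k)) :
    ∫ x, ∏ i : Fin k,
        ((if σ i = i then (1 : ℂ) else 0)
          - x (Fin.castLE hk i) * (starRingEnd ℂ) (x (Fin.castLE hk (σ i)))) ∂μ
      = ∑ t ∈ Finset.range ((Finset.univ.filter fun i => σ i = i).card + 1),
          (-1 : ℂ) ^ (k - t)
            * ((Finset.univ.filter fun i => σ i = i).card.choose t : ℂ)
            / ascC n (k - t) := by
  haveI := hprob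
  classical
  set ι : Fin k → Fin n := Fin.castLE hk with hι
  have hinj : Function.Injective ι := fun a b h => by
    simpa [hι, Fin.ext_iff] using h
  set emb : Fin k ↪ Fin n := ⟨ι, hinj⟩ with hemb
  set Fix : Finset (Fin k) := univ.filter (fun i => σ i = i) with hFixdef
  -- expansion
  have hexp : ∀ x : Fin n → ℂ,
      (∏ i : Fin k, ((if σ i = i then (1 : ℂ) else 0)
          - x (ι i) * (starRingEnd ℂ) (x (ι (σ i)))))
      = ∑ T ∈ (univ : Finset (Fin k)).powerset,
          (∏ i ∈ T, (if σ i = i then (1:ℂ) else 0))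
            * ∏ i ∈ univ \ T, -(x (ι i) * (starRingEnd ℂ) (x (ι (σ i)))) := by
    intro x
    simp only [sub_eq_add_neg]
    exact Finset.prod_add _ _ _
  have hIntT : ∀ T : Finset (Fin k), Integrable (fun x : Fin n → ℂ =>
      (∏ i ∈ T, (if σ i = i then (1:ℂ) else 0))
        * ∏ i ∈ univ \ T, -(x (ι i) * (starRingEnd ℂ) (x (ι (σ i))))) μ := by
    intro T
    refine integrable_bdd μ ?_ 1 ?_
    · refine measurable_const.mul (Finset.measurable_prod _ fun i _ => Measurable.neg ?_)
      exact (measurable_pi_apply _).mul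
        ((show Measurable fun z : ℂ => (starRingEnd ℂ) z from continuous_star.measurable).comp
          (measurable_pi_apply _))
    · filter_upwards [ae_norm_le μ hsupp] with x hx
      rw [norm_mul]
      have h1 : ‖∏ i ∈ T, (if σ i = i then (1:ℂ) else 0)‖ ≤ 1 := by
        refine (Finset.norm_prod_le _ _).trans ?_
        refine Finset.prod_le_one (fun i _ => norm_nonneg _) (fun i _ => ?_)
        split_ifs <;> simp
      have h2 : ‖∏ i ∈ univ \ T, -(x (ι i) * (starRingEnd ℂ) (x (ι (σ i))))‖ ≤ 1 := by
        refine (Finset.norm_prod_le _ _).trans ?_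
        refine Finset.prod_le_one (fun i _ => norm_nonneg _) (fun i _ => ?_)
        rw [norm_neg, norm_mul, RCLike.norm_conj]
        exact mul_le_one₀ (hx _) (norm_nonneg _) (hx _)
      exact mul_le_one₀ h1 (norm_nonneg _) h2
  have hstep1 : ∫ x, ∏ i : Fin k,
        ((if σ i = i then (1 : ℂ) else 0)
          - x (ι i) * (starRingEnd ℂ) (x (ι (σ i)))) ∂μ
      = ∑ T ∈ (univ : Finset (Fin k)).powerset,
          (∏ i ∈ T, (if σ i = i then (1:ℂ) else 0))
            * ∫ x, ∏ i ∈ univ \ T, -(x (ι i) * (starRingEnd ℂ) (x (ι (σ i)))) ∂μ := by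
    rw [integral_congr_ae (Filter.Eventually.of_forall hexp),
      integral_finset_sum _ (fun T _ => hIntT T)]
    exact Finset.sum_congr rfl fun T _ => integral_const_mul _ _
  rw [hstep1]
  -- kill terms with T not in Fix.powerset
  have hzero : ∀ T ∈ (univ : Finset (Fin k)).powerset, T ∉ Fix.powerset →
      (∏ i ∈ T, (if σ i = i then (1:ℂ) else 0))
        * ∫ x, ∏ i ∈ univ \ T, -(x (ι i) * (starRingEnd ℂ) (x (ι (σ i)))) ∂μ = 0 := by
    intro T _ hT
    rw [Finset.mem_powerset] at hT
    obtain ⟨i, hiT, hiF⟩ : ∃ i ∈ T, ¬ σ i = i := by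
      by_contra hcon
      push_neg at hcon
      exact hT fun a ha => Finset.mem_filter.mpr ⟨mem_univ _, hcon a ha⟩
    rw [Finset.prod_eq_zero hiT (if_neg hiF : (if σ i = i then (1:ℂ) else 0) = 0), zero_mul]
  rw [← Finset.sum_subset (Finset.powerset_mono.mpr (Finset.filter_subset _ _)) hzero]
  -- evaluate terms for T ⊆ Fix
  have hmain : ∀ T ∈ Fix.powerset,
      (∏ i ∈ T, (if σ i = i then (1:ℂ) else 0))
        * ∫ x, ∏ i ∈ univ \ T, -(x (ι i) * (starRingEnd ℂ) (x (ι (σ i)))) ∂μ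
      = (-1 : ℂ) ^ (k - T.card) * (ascC n (k - T.card))⁻¹ := by
    intro T hT
    rw [Finset.mem_powerset] at hT
    have hdelta : (∏ i ∈ T, (if σ i = i then (1:ℂ) else 0)) = 1 :=
      Finset.prod_eq_one fun i hi => if_pos (Finset.mem_filter.mp (hT hi)).2
    have hcard : (univ \ T).card = k - T.card := by
      rw [Finset.card_sdiff_of_subset (subset_univ T), Finset.card_univ, Fintype.card_fin]
    have hperm : ∀ x : Fin n → ℂ,
        (∏ i ∈ univ \ T, (starRingEnd ℂ) (x (ι (σ i))))
          = ∏ i ∈ univ \ T, (starRingEnd ℂ) (x (ι i)) := by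
      intro x
      refine Equiv.Perm.prod_comp σ (univ \ T) (fun i => (starRingEnd ℂ) (x (ι i))) ?_
      intro a ha
      simp only [Set.mem_setOf_eq] at ha
      simp only [Finset.coe_sdiff, Finset.coe_univ, Set.mem_diff, Set.mem_univ,
        Finset.mem_coe, true_and]
      exact fun haT => ha (Finset.mem_filter.mp (hT haT)).2
    have hptw : ∀ x : Fin n → ℂ,
        (∏ i ∈ univ \ T, -(x (ι i) * (starRingEnd ℂ) (x (ι (σ i)))))
        = (-1 : ℂ) ^ (k - T.card) * mono (indF ((univ \ T).map emb))
            (indF ((univ \ T).map emb)) x := by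
      intro x
      calc (∏ i ∈ univ \ T, -(x (ι i) * (starRingEnd ℂ) (x (ι (σ i)))))
          = ∏ i ∈ univ \ T, ((-1 : ℂ) * (x (ι i) * (starRingEnd ℂ) (x (ι (σ i))))) :=
            Finset.prod_congr rfl fun i _ => (neg_one_mul _).symm
        _ = ((-1 : ℂ) ^ (k - T.card))
            * ∏ i ∈ univ \ T, (x (ι i) * (starRingEnd ℂ) (x (ι (σ i)))) := by
            rw [Finset.prod_mul_distrib, Finset.prod_const, hcard]
        _ = ((-1 : ℂ) ^ (k - T.card))
            * ((∏ i ∈ univ \ T, x (ι i)) * ∏ i ∈ univ \ T, (starRingEnd ℂ) (x (ι (σ i)))) := by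
            rw [Finset.prod_mul_distrib]
        _ = ((-1 : ℂ) ^ (k - T.card))
            * ∏ i ∈ univ \ T, (x (ι i) * (starRingEnd ℂ) (x (ι i))) := by
            rw [hperm, Finset.prod_mul_distrib]
        _ = ((-1 : ℂ) ^ (k - T.card))
            * ∏ j ∈ (univ \ T).map emb, (x j * (starRingEnd ℂ) (x j)) := by
            rw [Finset.prod_map]
            rfl
        _ = _ := by rw [mono_indF]
    have hJ := J_asc μ hsupp hinv (k - T.card) (le_trans (Nat.sub_le k T.card) hk)
      ((univ \ T).map emb) (by rw [Finset.card_map, hcard])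
    have hJval : ∫ x, mono (indF ((univ \ T).map emb)) (indF ((univ \ T).map emb)) x ∂μ
        = (ascC n (k - T.card))⁻¹ := eq_inv_of_mul_eq_one_right hJ
    rw [hdelta, one_mul, integral_congr_ae (Filter.Eventually.of_forall hptw),
      integral_const_mul, hJval]
  refine (Finset.sum_congr rfl hmain).trans ?_
  -- group by cardinality
  rw [Finset.sum_powerset]
  have hFc : Fix.card = (Finset.univ.filter fun i => σ i = i).card := rfl
  refine Finset.sum_congr rfl fun t ht => ?_
  rw [Finset.mem_range] at ht
  have hinner : ∑ T ∈ Finset.powersetCard t Fix,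
      (-1 : ℂ) ^ (k - T.card) * (ascC n (k - T.card))⁻¹
      = ∑ _T ∈ Finset.powersetCard t Fix, (-1 : ℂ) ^ (k - t) * (ascC n (k - t))⁻¹ :=
    Finset.sum_congr rfl fun T hT => by
      rw [(Finset.mem_powersetCard.mp hT).2]
  rw [hinner, Finset.sum_const, Finset.card_powersetCard, nsmul_eq_mul, div_eq_mul_inv]
  ring
end
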